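/- arXiv:2202.07478 — 6 statements merged into one kernel-verified Lean document; each statement's English description precedes it below -/
import Mathlib

section
/- Suppose M₁ ∈ C¹([0,T], S_d(ℝ)), M₂ ∈ C¹([0,T], M_{d,r}(ℝ)), M₃ ∈ C¹([0,T], S_r(ℝ)) satisfy the coupled matrix ODE system: M₁′(t) = −¼(M₂(t) − B(t)ᵀ)A(t)⁻¹(M₂(t)ᵀ − B(t)) + C(t) − R(t)ᵀM₁(t) − M₁(t)R(t) + 2ρ·M₁(t)Σ(t)M₁(t); M₂′(t) = −(M₂(t) − B(t)ᵀ)A(t)⁻¹M₃(t) − R(t)ᵀM₂(t) + 2ρ·M₁(t)Σ(t)M₂(t); M₃′(t) = −M₃(t)A(t)⁻¹M₃(t) + (ρ/2)·M₂(t)ᵀΣ(t)M₂(t), with terminal conditions M₁(T) = −Ψ, M₂(T) = −Υ, M₃(T) = −Γ. Define M₆(t) = ∫_t^T Tr(Σ(s)M₁(s)) ds and θ(t,x,y) = xᵀM₁(t)x + xᵀM₂(t)y + yᵀM₃(t)y + M₆(t). Then for every (t,x,y) ∈ [0,T]×ℝ^d×ℝ^r, θ satisfies the partial differential equation 0 =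 ∂ₜθ + ¼(∇_yθ − B(t)x)ᵀA(t)⁻¹(∇_yθ − B(t)x) − xᵀC(t)x + xᵀR(t)ᵀ∇ₓθ + ½Tr(Σ(t)·D²ₓₓθ) − (ρ/2)(∇ₓθ)ᵀΣ(t)∇ₓθ, together with the terminal condition θ(T,x,y) = −(xᵀΨx + xᵀΥy + yᵀΓy). -/
open Matrix Set intervalIntegral

noncomputable section

variable {d r : ℕ}

/-- Partial derivative in time of `θ(t,x,y)` along `[0,T]`. -/
def ptime (T : ℝ) (θ : ℝ → (Fin d → ℝ) → (Fin r → ℝ) → ℝ)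
    (t : ℝ) (x : Fin d → ℝ) (y : Fin r → ℝ) : ℝ :=
  derivWithin (fun τ => θ τ x y) (Icc 0 T) t

/-- Gradient of `θ(t,x,y)` in `x` (vector of partial derivatives). -/
def gradX (θ : ℝ → (Fin d → ℝ) → (Fin r → ℝ) → ℝ)
    (t : ℝ) (x : Fin d → ℝ) (y : Fin r → ℝ) : Fin d → ℝ :=
  fun i => deriv (fun s => θ t (Function.update x i s) y) (x i)

/-- Gradient of `θ(t,x,y)` in `y` (vector of partial derivatives). -/
def gradY (θ : ℝ → (Fin d → ℝ) → (Fin r → ℝ) → ℝ)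
    (t : ℝ) (x : Fin d → ℝ) (y : Fin r → ℝ) : Fin r → ℝ :=
  fun j => deriv (fun s => θ t x (Function.update y j s)) (y j)

/-- Hessian of `θ(t,x,y)` in `x` (matrix of second partial derivatives). -/
def hessX (θ : ℝ → (Fin d → ℝ) → (Fin r → ℝ) → ℝ)
    (t : ℝ) (x : Fin d → ℝ) (y : Fin r → ℝ) : Matrix (Fin d) (Fin d) ℝ :=
  fun i j => deriv (fun s => gradX θ t (Function.update x j s) y i) (x j)

/-- The quadratic ansatz `θ(t,x,y) = xᵀM₁(t)x + xᵀM₂(t)y + yᵀM₃(t)y + M₆(t)` with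
`M₆(t) = ∫_t^T Tr(Σ(s)M₁(s)) ds`. -/
def thetaAnsatz (T : ℝ) (M₁ : ℝ → Matrix (Fin d) (Fin d) ℝ)
    (M₂ : ℝ → Matrix (Fin d) (Fin r) ℝ) (M₃ : ℝ → Matrix (Fin r) (Fin r) ℝ)
    (Sg : ℝ → Matrix (Fin d) (Fin d) ℝ)
    (t : ℝ) (x : Fin d → ℝ) (y : Fin r → ℝ) : ℝ :=
  x ⬝ᵥ (M₁ t).mulVec x + x ⬝ᵥ (M₂ t).mulVec y + y ⬝ᵥ (M₃ t).mulVec y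
    + ∫ s in t..T, (Sg s * M₁ s).trace


open Topology Filter MeasureTheory

section Helpers

lemma dot_flip {m n : ℕ} (u : Fin m → ℝ) (M : Matrix (Fin m) (Fin n) ℝ) (v : Fin n → ℝ) :
    u ⬝ᵥ M.mulVec v = v ⬝ᵥ Mᵀ.mulVec u := by
  rw [dotProduct_mulVec, dotProduct_comm, Matrix.mulVec_transpose]

lemma mulVec_dot {m n : ℕ} (P : Matrix (Fin m) (Fin n) ℝ) (u : Fin n → ℝ) (w : Fin m → ℝ) :
    (P.mulVec u) ⬝ᵥ w = u ⬝ᵥ Pᵀ.mulVec w := by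
  rw [dotProduct_comm, dot_flip]

lemma quad_shift {a b c : ℕ} (P : Matrix (Fin a) (Fin b) ℝ) (M : Matrix (Fin a) (Fin a) ℝ)
    (Q : Matrix (Fin a) (Fin c) ℝ) (u : Fin b → ℝ) (v : Fin c → ℝ) :
    (P.mulVec u) ⬝ᵥ M.mulVec (Q.mulVec v) = u ⬝ᵥ (Pᵀ * M * Q).mulVec v := by
  rw [mulVec_dot, Matrix.mulVec_mulVec, Matrix.mulVec_mulVec]

lemma hasDerivAt_update_dot {n : ℕ} (x : Fin n → ℝ) (i : Fin n) (v : Fin n → ℝ) :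
    HasDerivAt (fun s => Function.update x i s ⬝ᵥ v) (v i) (x i) := by
  have h : ∀ j : Fin n, HasDerivAt (fun s => Function.update x i s j * v j)
      (if j = i then v j else 0) (x i) := by
    intro j
    by_cases hj : j = i
    · subst hj
      simpa [Function.update_self] using (hasDerivAt_id (x j)).mul_const (v j)
    · simp only [Function.update_of_ne hj, hj, if_false]
      exact hasDerivAt_const (x i) (x j * v j)
  have := HasDerivAt.fun_sum (fun j (_ : j ∈ Finset.univ) => h j)
  simpa [dotProduct, Finset.sum_ite_eq'] using this

lemma hasDerivAt_update_quad {n : ℕ} (x : Fin n → ℝ) (i : Fin n) (M : Matrix (Fin n) (Fin n) ℝ) :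
    HasDerivAt (fun s => Function.update x i s ⬝ᵥ M.mulVec (Function.update x i s))
      (M.mulVec x i + Mᵀ.mulVec x i) (x i) := by
  have hu : ∀ j : Fin n, HasDerivAt (fun s => Function.update x i s j)
      (if j = i then 1 else 0) (x i) := by
    intro j
    by_cases hj : j = i
    · subst hj; simpa [Function.update_self] using (hasDerivAt_id' (x j))
    · simp only [Function.update_of_ne hj, hj, if_false]
      exact hasDerivAt_const (x i) (x j)
  have h : ∀ j k : Fin n, HasDerivAt
      (fun s => Function.update x i s j * (M j k * Function.update x i s k))
      ((if j = i then 1 else 0) * (M j k * x k)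
        + x j * (M j k * (if k = i then 1 else 0))) (x i) := by
    intro j k
    have := (hu j).fun_mul ((hu k).const_mul (M j k))
    simpa [Function.update_eq_self] using this
  have hsum : HasDerivAt (fun s => ∑ j, ∑ k,
      Function.update x i s j * (M j k * Function.update x i s k))
      (∑ j, ∑ k, ((if j = i then 1 else 0) * (M j k * x k)
        + x j * (M j k * (if k = i then 1 else 0)))) (x i) :=
    HasDerivAt.fun_sum (fun j _ => HasDerivAt.fun_sum (fun k _ => h j k))
  have hfun : (fun s => Function.update x i s ⬝ᵥ M.mulVec (Function.update x i s))
      = fun s => ∑ j, ∑ k, Function.update x i s j * (M j k * Function.update x i s k) := by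
    funext s
    simp [dotProduct, Matrix.mulVec, Finset.mul_sum]
  rw [hfun]
  convert hsum using 1
  simp [Finset.sum_add_distrib, Finset.sum_ite_eq', mul_ite, ite_mul,
    Matrix.mulVec, dotProduct, mul_comm]

lemma hasDerivWithinAt_bilin {m n : ℕ} (a : Fin m → ℝ) (b : Fin n → ℝ)
    (M : ℝ → Matrix (Fin m) (Fin n) ℝ) (D : Matrix (Fin m) (Fin n) ℝ)
    (s : Set ℝ) (t : ℝ)
    (h : ∀ i j, HasDerivWithinAt (fun τ => M τ i j) (D i j) s t) :
    HasDerivWithinAt (fun τ => a ⬝ᵥ (M τ).mulVec b) (a ⬝ᵥ D.mulVec b) s t := by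
  have hsum : HasDerivWithinAt (fun τ => ∑ i, a i * ∑ j, M τ i j * b j)
      (∑ i, a i * ∑ j, D i j * b j) s t :=
    HasDerivWithinAt.fun_sum (fun i _ =>
      (HasDerivWithinAt.fun_sum (fun j _ => (h i j).mul_const (b j))).const_mul (a i))
  simpa [dotProduct, Matrix.mulVec] using hsum

lemma gradX_thetaAnsatz {d r : ℕ} (T : ℝ) (M₁ : ℝ → Matrix (Fin d) (Fin d) ℝ)
    (M₂ : ℝ → Matrix (Fin d) (Fin r) ℝ) (M₃ : ℝ → Matrix (Fin r) (Fin r) ℝ)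
    (Sg : ℝ → Matrix (Fin d) (Fin d) ℝ) (t : ℝ) (x : Fin d → ℝ) (y : Fin r → ℝ) :
    gradX (thetaAnsatz T M₁ M₂ M₃ Sg) t x y
      = (M₁ t + (M₁ t)ᵀ).mulVec x + (M₂ t).mulVec y := by
  funext i
  have h1 := hasDerivAt_update_quad x i (M₁ t)
  have h2 := hasDerivAt_update_dot x i ((M₂ t).mulVec y)
  have h := ((h1.fun_add h2).add_const
    (y ⬝ᵥ (M₃ t).mulVec y + ∫ s in t..T, (Sg s * M₁ s).trace))
  have hfun : (fun s => thetaAnsatz T M₁ M₂ M₃ Sg t (Function.update x i s) y)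
      = fun s => (Function.update x i s ⬝ᵥ (M₁ t).mulVec (Function.update x i s)
          + Function.update x i s ⬝ᵥ (M₂ t).mulVec y)
        + (y ⬝ᵥ (M₃ t).mulVec y + ∫ s in t..T, (Sg s * M₁ s).trace) := by
    funext s; simp [thetaAnsatz]; ring
  simp only [gradX, hfun]
  rw [h.deriv]
  simp [Matrix.add_mulVec]

lemma gradY_thetaAnsatz {d r : ℕ} (T : ℝ) (M₁ : ℝ → Matrix (Fin d) (Fin d) ℝ)
    (M₂ : ℝ → Matrix (Fin d) (Fin r) ℝ) (M₃ : ℝ → Matrix (Fin r) (Fin r) ℝ)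
    (Sg : ℝ → Matrix (Fin d) (Fin d) ℝ) (t : ℝ) (x : Fin d → ℝ) (y : Fin r → ℝ) :
    gradY (thetaAnsatz T M₁ M₂ M₃ Sg) t x y
      = (M₂ t)ᵀ.mulVec x + (M₃ t + (M₃ t)ᵀ).mulVec y := by
  funext j
  have h1 := hasDerivAt_update_dot y j ((M₂ t)ᵀ.mulVec x)
  have h2 := hasDerivAt_update_quad y j (M₃ t)
  have h := ((h1.fun_add h2).add_const
    (x ⬝ᵥ (M₁ t).mulVec x + ∫ s in t..T, (Sg s * M₁ s).trace))
  have hfun : (fun s => thetaAnsatz T M₁ M₂ M₃ Sg t x (Function.update y j s))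
      = fun s => (Function.update y j s ⬝ᵥ (M₂ t)ᵀ.mulVec x
          + Function.update y j s ⬝ᵥ (M₃ t).mulVec (Function.update y j s))
        + (x ⬝ᵥ (M₁ t).mulVec x + ∫ s in t..T, (Sg s * M₁ s).trace) := by
    funext s
    simp only [thetaAnsatz]
    rw [dot_flip x (M₂ t) (Function.update y j s)]
    ring
  simp only [gradY, hfun]
  rw [h.deriv]
  simp [Matrix.add_mulVec]

lemma hessX_thetaAnsatz {d r : ℕ} (T : ℝ) (M₁ : ℝ → Matrix (Fin d) (Fin d) ℝ)
    (M₂ : ℝ → Matrix (Fin d) (Fin r) ℝ) (M₃ : ℝ → Matrix (Fin r) (Fin r) ℝ)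
    (Sg : ℝ → Matrix (Fin d) (Fin d) ℝ) (t : ℝ) (x : Fin d → ℝ) (y : Fin r → ℝ) :
    hessX (thetaAnsatz T M₁ M₂ M₃ Sg) t x y = M₁ t + (M₁ t)ᵀ := by
  funext i j
  have hfun : (fun s => gradX (thetaAnsatz T M₁ M₂ M₃ Sg) t (Function.update x j s) y i)
      = fun s => Function.update x j s ⬝ᵥ (M₁ t + (M₁ t)ᵀ)ᵀ.mulVec (fun k => if k = i then 1 else 0)
        + ((M₂ t).mulVec y) i := by
    funext s
    rw [gradX_thetaAnsatz]
    simp [Matrix.mulVec, dotProduct, Matrix.transpose_apply, mul_comm]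
  have h := (hasDerivAt_update_dot x j
      ((M₁ t + (M₁ t)ᵀ)ᵀ.mulVec (fun k => if k = i then 1 else 0))).add_const
      (((M₂ t).mulVec y) i)
  simp only [hessX, hfun]
  rw [h.deriv]
  simp [Matrix.mulVec, dotProduct, Matrix.transpose_apply]

end Helpers
/-- **Theorem 1 (first part).** If `(M₁,M₂,M₃)` solve the Riccati ODE system with terminal
conditions `M₁(T) = -Ψ`, `M₂(T) = -Υ`, `M₃(T) = -Γ`, then the quadratic ansatz `θ` solves the
HJB-type PDE `0 = ∂ₜθ + ¼(∇_yθ − Bx)ᵀA⁻¹(∇_yθ − Bx) − xᵀCx + xᵀRᵀ∇ₓθ + ½Tr(Σ D²ₓₓθ)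
− (ρ/2)(∇ₓθ)ᵀΣ∇ₓθ` with terminal condition `θ(T,x,y) = −(xᵀΨx + xᵀΥy + yᵀΓy)`. -/
theorem quadratic_ansatz_solves_pde
    (d r : ℕ) (hd : 0 < d) (hr : 0 < r) (hrd : r ≤ d)
    (T ρ : ℝ) (hT : 0 < T) (hρ : 0 < ρ)
    (Q₁₁ Y₁₁ U₁₁ : ℝ → Matrix (Fin d) (Fin d) ℝ)
    (Y₂₁ : ℝ → Matrix (Fin r) (Fin d) ℝ)
    (U₂₂ : ℝ → Matrix (Fin r) (Fin r) ℝ)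
    (Ψ : Matrix (Fin d) (Fin d) ℝ) (Γ : Matrix (Fin r) (Fin r) ℝ)
    (Υ : Matrix (Fin d) (Fin r) ℝ)
    (hQ₁₁c : ContinuousOn Q₁₁ (Icc 0 T)) (hQ₁₁s : ∀ t ∈ Icc (0:ℝ) T, (Q₁₁ t).IsSymm)
    (hY₁₁c : ContinuousOn Y₁₁ (Icc 0 T))
    (hY₂₁c : ContinuousOn Y₂₁ (Icc 0 T))
    (hU₁₁c : ContinuousOn U₁₁ (Icc 0 T)) (hU₁₁ : ∀ t ∈ Icc (0:ℝ) T, (U₁₁ t).PosSemidef)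
    (hU₂₂c : ContinuousOn U₂₂ (Icc 0 T)) (hU₂₂ : ∀ t ∈ Icc (0:ℝ) T, (U₂₂ t).PosDef)
    (hΨ : Ψ.PosSemidef) (hΓ : Γ.IsSymm)
    -- the change of variables
    (A : ℝ → Matrix (Fin r) (Fin r) ℝ) (hA : ∀ t, A t = (U₂₂ t)⁻¹)
    (B : ℝ → Matrix (Fin r) (Fin d) ℝ) (hB : ∀ t, B t = (2:ℝ) • (U₂₂ t * Y₂₁ t))
    (C : ℝ → Matrix (Fin d) (Fin d) ℝ) (hC : ∀ t, C t = Q₁₁ t + (Y₂₁ t)ᵀ * U₂₂ t * Y₂₁ t)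
    (R : ℝ → Matrix (Fin d) (Fin d) ℝ) (hR : ∀ t, R t = -Y₁₁ t)
    (Sg : ℝ → Matrix (Fin d) (Fin d) ℝ) (hSg : ∀ t, Sg t = (1/2 : ℝ) • U₁₁ t)
    -- `(M₁, M₂, M₃)` is a C¹ solution of the Riccati ODE system
    (M₁ : ℝ → Matrix (Fin d) (Fin d) ℝ) (M₂ : ℝ → Matrix (Fin d) (Fin r) ℝ)
    (M₃ : ℝ → Matrix (Fin r) (Fin r) ℝ)
    (hM₁s : ∀ t ∈ Icc (0:ℝ) T, (M₁ t).IsSymm) (hM₃s : ∀ t ∈ Icc (0:ℝ) T, (M₃ t).IsSymm)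
    (hM₁C1 : ∀ i j, ContDiffOn ℝ 1 (fun τ => M₁ τ i j) (Icc (0:ℝ) T))
    (hM₂C1 : ∀ i j, ContDiffOn ℝ 1 (fun τ => M₂ τ i j) (Icc (0:ℝ) T))
    (hM₃C1 : ∀ i j, ContDiffOn ℝ 1 (fun τ => M₃ τ i j) (Icc (0:ℝ) T))
    (hM₁ode : ∀ t ∈ Icc (0:ℝ) T, ∀ i j,
      HasDerivWithinAt (fun τ => M₁ τ i j)
        ((-((1/4 : ℝ) • ((M₂ t - (B t)ᵀ) * (A t)⁻¹ * ((M₂ t)ᵀ - B t))) + C t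
          - (R t)ᵀ * M₁ t - M₁ t * R t + (2 * ρ) • (M₁ t * Sg t * M₁ t)) i j)
        (Icc (0:ℝ) T) t)
    (hM₂ode : ∀ t ∈ Icc (0:ℝ) T, ∀ i j,
      HasDerivWithinAt (fun τ => M₂ τ i j)
        ((-((M₂ t - (B t)ᵀ) * (A t)⁻¹ * M₃ t) - (R t)ᵀ * M₂ t
          + (2 * ρ) • (M₁ t * Sg t * M₂ t)) i j)
        (Icc (0:ℝ) T) t)
    (hM₃ode : ∀ t ∈ Icc (0:ℝ) T, ∀ i j,
      HasDerivWithinAt (fun τ => M₃ τ i j)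
        ((-(M₃ t * (A t)⁻¹ * M₃ t) + (ρ / 2) • ((M₂ t)ᵀ * Sg t * M₂ t)) i j)
        (Icc (0:ℝ) T) t)
    (hM₁T : M₁ T = -Ψ) (hM₂T : M₂ T = -Υ) (hM₃T : M₃ T = -Γ) :
    (∀ t ∈ Icc (0:ℝ) T, ∀ (x : Fin d → ℝ) (y : Fin r → ℝ),
      0 = ptime T (thetaAnsatz T M₁ M₂ M₃ Sg) t x y
        + (1/4 : ℝ) * ((gradY (thetaAnsatz T M₁ M₂ M₃ Sg) t x y - (B t).mulVec x) ⬝ᵥ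
            (A t)⁻¹.mulVec (gradY (thetaAnsatz T M₁ M₂ M₃ Sg) t x y - (B t).mulVec x))
        - x ⬝ᵥ (C t).mulVec x
        + x ⬝ᵥ (R t)ᵀ.mulVec (gradX (thetaAnsatz T M₁ M₂ M₃ Sg) t x y)
        + (1/2 : ℝ) * (Sg t * hessX (thetaAnsatz T M₁ M₂ M₃ Sg) t x y).trace
        - (ρ / 2) * (gradX (thetaAnsatz T M₁ M₂ M₃ Sg) t x y ⬝ᵥ
            (Sg t).mulVec (gradX (thetaAnsatz T M₁ M₂ M₃ Sg) t x y))) ∧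
    (∀ (x : Fin d → ℝ) (y : Fin r → ℝ),
      thetaAnsatz T M₁ M₂ M₃ Sg T x y
        = -(x ⬝ᵥ Ψ.mulVec x + x ⬝ᵥ Υ.mulVec y + y ⬝ᵥ Γ.mulVec y)) := by
  constructor
  · intro t ht x y
    have hM1 : (M₁ t)ᵀ = M₁ t := hM₁s t ht
    have hM3 : (M₃ t)ᵀ = M₃ t := hM₃s t ht
    have hU22s : (U₂₂ t)ᵀ = U₂₂ t := by
      have h := (hU₂₂ t ht).1
      rwa [Matrix.IsHermitian, Matrix.conjTranspose_eq_transpose_of_trivial] at h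
    have hSgsym : (Sg t)ᵀ = Sg t := by
      have h := (hU₁₁ t ht).1
      rw [Matrix.IsHermitian, Matrix.conjTranspose_eq_transpose_of_trivial] at h
      rw [hSg, Matrix.transpose_smul, h]
    have hAsym : (A t)ᵀ = A t := by
      rw [hA, Matrix.transpose_nonsing_inv, hU22s]
    have hAisym : ((A t)⁻¹)ᵀ = (A t)⁻¹ := by
      rw [Matrix.transpose_nonsing_inv, hAsym]
    -- continuity of the trace integrand
    have hM₁c : ∀ i k, ContinuousOn (fun τ => M₁ τ i k) (Icc 0 T) :=
      fun i k => (hM₁C1 i k).continuousOn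
    have hSgc : ∀ (i k : Fin d), ContinuousOn (fun τ => Sg τ i k) (Icc 0 T) := by
      intro i k
      have h1 : ContinuousOn (fun τ => U₁₁ τ i k) (Icc 0 T) := by
        have hcont : Continuous (fun M : Matrix (Fin d) (Fin d) ℝ => M i k) :=
          (continuous_apply k).comp (continuous_apply i)
        simpa [Function.comp_def] using hcont.comp_continuousOn hU₁₁c
      have h2 : ContinuousOn (fun τ => (1/2 : ℝ) * U₁₁ τ i k) (Icc 0 T) :=
        continuousOn_const.mul h1
      have : (fun τ => Sg τ i k) = fun τ => (1/2 : ℝ) * U₁₁ τ i k := by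
        funext τ; rw [hSg]; simp
      rw [this]; exact h2
    have hgc : ContinuousOn (fun τ => (Sg τ * M₁ τ).trace) (Icc 0 T) := by
      have h : ContinuousOn (fun τ => ∑ i : Fin d, ∑ k : Fin d, Sg τ i k * M₁ τ k i)
          (Icc 0 T) :=
        continuousOn_finset_sum _ (fun i _ =>
          continuousOn_finset_sum _ (fun k _ => (hSgc i k).mul (hM₁c k i)))
      have he : (fun τ => (Sg τ * M₁ τ).trace)
          = fun τ => ∑ i : Fin d, ∑ k : Fin d, Sg τ i k * M₁ τ k i := by
        funext τ; simp [Matrix.trace, Matrix.diag, Matrix.mul_apply]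
      rw [he]; exact h
    have hmeasIcc : MeasureTheory.AEStronglyMeasurable (fun τ => (Sg τ * M₁ τ).trace)
        (MeasureTheory.volume.restrict (Icc 0 T)) :=
      hgc.aestronglyMeasurable measurableSet_Icc
    have hInt : IntervalIntegrable (fun τ => (Sg τ * M₁ τ).trace) MeasureTheory.volume t T := by
      apply ContinuousOn.intervalIntegrable
      apply hgc.mono
      rw [uIcc_of_le ht.2]
      exact Icc_subset_Icc ht.1 le_rfl
    -- derivative of the integral term
    have hF : HasDerivWithinAt (fun τ => ∫ s in τ..T, (Sg s * M₁ s).trace)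
        (-(Sg t * M₁ t).trace) (Icc 0 T) t := by
      haveI : Fact (t ∈ Icc (0:ℝ) T) := ⟨ht⟩
      have hmeas : StronglyMeasurableAtFilter (fun τ => (Sg τ * M₁ τ).trace)
          (𝓝[Icc (0:ℝ) T] t) := ⟨Icc 0 T, self_mem_nhdsWithin, hmeasIcc⟩
      exact intervalIntegral.integral_hasDerivWithinAt_left hInt hmeas (hgc t ht)
    -- time derivative of θ
    have hq1 := hasDerivWithinAt_bilin x x M₁ _ _ _ (hM₁ode t ht)
    have hq2 := hasDerivWithinAt_bilin x y M₂ _ _ _ (hM₂ode t ht)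
    have hq3 := hasDerivWithinAt_bilin y y M₃ _ _ _ (hM₃ode t ht)
    have hθt := ((hq1.add hq2).add hq3).add hF
    have hptime : ptime T (thetaAnsatz T M₁ M₂ M₃ Sg) t x y =
        x ⬝ᵥ (-((1/4 : ℝ) • ((M₂ t - (B t)ᵀ) * (A t)⁻¹ * ((M₂ t)ᵀ - B t))) + C t
            - (R t)ᵀ * M₁ t - M₁ t * R t + (2 * ρ) • (M₁ t * Sg t * M₁ t)).mulVec x
          + x ⬝ᵥ (-((M₂ t - (B t)ᵀ) * (A t)⁻¹ * M₃ t) - (R t)ᵀ * M₂ t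
            + (2 * ρ) • (M₁ t * Sg t * M₂ t)).mulVec y
          + y ⬝ᵥ (-(M₃ t * (A t)⁻¹ * M₃ t) + (ρ / 2) • ((M₂ t)ᵀ * Sg t * M₂ t)).mulVec y
          + -(Sg t * M₁ t).trace := by
      exact hθt.derivWithin ((uniqueDiffOn_Icc hT) t ht)
    -- abbreviations for the scalar atoms
    have hMR : x ⬝ᵥ (M₁ t * R t).mulVec x = x ⬝ᵥ ((R t)ᵀ * M₁ t).mulVec x := by
      rw [dot_flip, Matrix.transpose_mul, hM1]
    have h1 : x ⬝ᵥ (-((1/4 : ℝ) • ((M₂ t - (B t)ᵀ) * (A t)⁻¹ * ((M₂ t)ᵀ - B t))) + C t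
            - (R t)ᵀ * M₁ t - M₁ t * R t + (2 * ρ) • (M₁ t * Sg t * M₁ t)).mulVec x
        = -((1/4 : ℝ) * (x ⬝ᵥ ((M₂ t - (B t)ᵀ) * (A t)⁻¹ * ((M₂ t)ᵀ - B t)).mulVec x))
          + x ⬝ᵥ (C t).mulVec x - 2 * (x ⬝ᵥ ((R t)ᵀ * M₁ t).mulVec x)
          + 2 * ρ * (x ⬝ᵥ (M₁ t * Sg t * M₁ t).mulVec x) := by
      simp only [Matrix.add_mulVec, Matrix.sub_mulVec, Matrix.neg_mulVec,
        Matrix.smul_mulVec, dotProduct_add, dotProduct_sub, dotProduct_neg,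
        dotProduct_smul, smul_eq_mul]
      linear_combination -hMR
    have h2 : x ⬝ᵥ (-((M₂ t - (B t)ᵀ) * (A t)⁻¹ * M₃ t) - (R t)ᵀ * M₂ t
            + (2 * ρ) • (M₁ t * Sg t * M₂ t)).mulVec y
        = -(x ⬝ᵥ ((M₂ t - (B t)ᵀ) * (A t)⁻¹ * M₃ t).mulVec y)
          - x ⬝ᵥ ((R t)ᵀ * M₂ t).mulVec y
          + 2 * ρ * (x ⬝ᵥ (M₁ t * Sg t * M₂ t).mulVec y) := by
      simp only [Matrix.add_mulVec, Matrix.sub_mulVec, Matrix.neg_mulVec,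
        Matrix.smul_mulVec, dotProduct_add, dotProduct_sub, dotProduct_neg,
        dotProduct_smul, smul_eq_mul]
    have h3 : y ⬝ᵥ (-(M₃ t * (A t)⁻¹ * M₃ t) + (ρ / 2) • ((M₂ t)ᵀ * Sg t * M₂ t)).mulVec y
        = -(y ⬝ᵥ (M₃ t * (A t)⁻¹ * M₃ t).mulVec y)
          + ρ / 2 * (y ⬝ᵥ ((M₂ t)ᵀ * Sg t * M₂ t).mulVec y) := by
      simp only [Matrix.add_mulVec, Matrix.neg_mulVec, Matrix.smul_mulVec,
        dotProduct_add, dotProduct_neg, dotProduct_smul, smul_eq_mul]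
    -- the quarter term
    have e0 : (M₂ t)ᵀ.mulVec x + (M₃ t + M₃ t).mulVec y - (B t).mulVec x
        = ((M₂ t)ᵀ - B t).mulVec x + ((M₃ t).mulVec y + (M₃ t).mulVec y) := by
      rw [Matrix.sub_mulVec, Matrix.add_mulVec]; abel
    have e1 : ((M₂ t)ᵀ - B t).mulVec x ⬝ᵥ (A t)⁻¹.mulVec (((M₂ t)ᵀ - B t).mulVec x)
        = x ⬝ᵥ ((M₂ t - (B t)ᵀ) * (A t)⁻¹ * ((M₂ t)ᵀ - B t)).mulVec x := by
      rw [quad_shift, Matrix.transpose_sub, Matrix.transpose_transpose]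
    have e2 : ((M₂ t)ᵀ - B t).mulVec x ⬝ᵥ (A t)⁻¹.mulVec ((M₃ t).mulVec y)
        = x ⬝ᵥ ((M₂ t - (B t)ᵀ) * (A t)⁻¹ * M₃ t).mulVec y := by
      rw [quad_shift, Matrix.transpose_sub, Matrix.transpose_transpose]
    have e3 : (M₃ t).mulVec y ⬝ᵥ (A t)⁻¹.mulVec (((M₂ t)ᵀ - B t).mulVec x)
        = x ⬝ᵥ ((M₂ t - (B t)ᵀ) * (A t)⁻¹ * M₃ t).mulVec y := by
      rw [dot_flip ((M₃ t).mulVec y) ((A t)⁻¹) (((M₂ t)ᵀ - B t).mulVec x)]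
      rw [hAisym]
      exact e2
    have e4 : (M₃ t).mulVec y ⬝ᵥ (A t)⁻¹.mulVec ((M₃ t).mulVec y)
        = y ⬝ᵥ (M₃ t * (A t)⁻¹ * M₃ t).mulVec y := by
      rw [quad_shift, hM3]
    have h4 : ((M₂ t)ᵀ.mulVec x + (M₃ t + M₃ t).mulVec y - (B t).mulVec x) ⬝ᵥ
          (A t)⁻¹.mulVec ((M₂ t)ᵀ.mulVec x + (M₃ t + M₃ t).mulVec y - (B t).mulVec x)
        = x ⬝ᵥ ((M₂ t - (B t)ᵀ) * (A t)⁻¹ * ((M₂ t)ᵀ - B t)).mulVec x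
          + 4 * (x ⬝ᵥ ((M₂ t - (B t)ᵀ) * (A t)⁻¹ * M₃ t).mulVec y)
          + 4 * (y ⬝ᵥ (M₃ t * (A t)⁻¹ * M₃ t).mulVec y) := by
      rw [e0]
      simp only [Matrix.mulVec_add, dotProduct_add, add_dotProduct]
      rw [e1, e2, e3, e4]
      ring
    have h5 : x ⬝ᵥ (R t)ᵀ.mulVec ((M₁ t + M₁ t).mulVec x + (M₂ t).mulVec y)
        = 2 * (x ⬝ᵥ ((R t)ᵀ * M₁ t).mulVec x) + x ⬝ᵥ ((R t)ᵀ * M₂ t).mulVec y := by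
      simp only [Matrix.add_mulVec, Matrix.mulVec_add, Matrix.mulVec_mulVec, dotProduct_add]
      ring
    have h6 : (Sg t * (M₁ t + M₁ t)).trace = 2 * (Sg t * M₁ t).trace := by
      rw [Matrix.mul_add, Matrix.trace_add]; ring
    have f1 : (M₁ t).mulVec x ⬝ᵥ (Sg t).mulVec ((M₁ t).mulVec x)
        = x ⬝ᵥ (M₁ t * Sg t * M₁ t).mulVec x := by rw [quad_shift, hM1]
    have f2 : (M₁ t).mulVec x ⬝ᵥ (Sg t).mulVec ((M₂ t).mulVec y)
        = x ⬝ᵥ (M₁ t * Sg t * M₂ t).mulVec y := by rw [quad_shift, hM1]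
    have f3 : (M₂ t).mulVec y ⬝ᵥ (Sg t).mulVec ((M₁ t).mulVec x)
        = x ⬝ᵥ (M₁ t * Sg t * M₂ t).mulVec y := by
      rw [dot_flip ((M₂ t).mulVec y) (Sg t) ((M₁ t).mulVec x), hSgsym]
      exact f2
    have f4 : (M₂ t).mulVec y ⬝ᵥ (Sg t).mulVec ((M₂ t).mulVec y)
        = y ⬝ᵥ ((M₂ t)ᵀ * Sg t * M₂ t).mulVec y := by rw [quad_shift]
    have h7 : ((M₁ t + M₁ t).mulVec x + (M₂ t).mulVec y) ⬝ᵥ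
          (Sg t).mulVec ((M₁ t + M₁ t).mulVec x + (M₂ t).mulVec y)
        = 4 * (x ⬝ᵥ (M₁ t * Sg t * M₁ t).mulVec x)
          + 4 * (x ⬝ᵥ (M₁ t * Sg t * M₂ t).mulVec y)
          + y ⬝ᵥ ((M₂ t)ᵀ * Sg t * M₂ t).mulVec y := by
      simp only [Matrix.add_mulVec, Matrix.mulVec_add, dotProduct_add, add_dotProduct]
      rw [f1, f2, f3, f4]
      ring
    rw [hptime, gradX_thetaAnsatz, gradY_thetaAnsatz, hessX_thetaAnsatz, hM1, hM3]
    linear_combination (-1 : ℝ) * h1 - h2 - h3 - (1/4 : ℝ) * h4 - h5 - (1/2 : ℝ) * h6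
      + (ρ/2) * h7
  · intro x y
    simp [thetaAnsatz, hM₁T, hM₂T, hM₃T, Matrix.neg_mulVec, dotProduct_neg]
    ring
end
end

section
/- Suppose θ : [0,T]×ℝ^d×ℝ^r → ℝ is continuously differentiable in t and y and twice continuously differentiable in x, and satisfies, for all (t,x,y) ∈ [0,T]×ℝ^d×ℝ^r, the equation 0 = ∂ₜθ + ¼(∇_yθ − B(t)x)ᵀA(t)⁻¹(∇_yθ − B(t)x) − xᵀC(t)x + xᵀR(t)ᵀ∇ₓθ + ½Tr(Σ(t)·D²ₓₓθ) − (ρ/2)(∇ₓθ)ᵀΣ(t)∇ₓθ with terminal condition θ(T,x,y) = −(xᵀΨx + xᵀΥy + yᵀΓy). Then the function w(t,x,y,z) := −exp(−ρ(z + θ(t,x,y))) satisfies, for all (t,x,y,z) ∈ [0,T]×ℝ^d×ℝ^r×ℝ, the Hamilton–Jacobi–Bellman equation 0 = ∂ₜw + sup_{u ∈ ℝ^r} { uᵀ∇_yw − (uᵀA(t)u + uᵀB(t)x)·∂_zw } − xᵀC(t)x·∂_zw + xᵀR(t)ᵀ∇ₓw + ½Tr(Σ(t)·D²ₓₓw),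 with terminal condition w(T,x,y,z) = −exp(−ρ(z − xᵀΨx − xᵀΥy − yᵀΓy)); moreover, for each (t,x,y,z) the supremum over u is attained at u* = ½·A(t)⁻¹(∇_yθ(t,x,y) − B(t)x). -/
open Matrix Set

noncomputable section

variable {d r : ℕ}

/-- Partial derivative in time of `w(t,x,y,z)` along `[0,T]`. -/
def ptimeW (T : ℝ) (w : ℝ → (Fin d → ℝ) → (Fin r → ℝ) → ℝ → ℝ)
    (t : ℝ) (x : Fin d → ℝ) (y : Fin r → ℝ) (z : ℝ) : ℝ :=
  derivWithin (fun τ => w τ x y z) (Icc 0 T) t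

/-- Gradient of `w(t,x,y,z)` in `x`. -/
def gradXW (w : ℝ → (Fin d → ℝ) → (Fin r → ℝ) → ℝ → ℝ)
    (t : ℝ) (x : Fin d → ℝ) (y : Fin r → ℝ) (z : ℝ) : Fin d → ℝ :=
  fun i => deriv (fun s => w t (Function.update x i s) y z) (x i)

/-- Gradient of `w(t,x,y,z)` in `y`. -/
def gradYW (w : ℝ → (Fin d → ℝ) → (Fin r → ℝ) → ℝ → ℝ)
    (t : ℝ) (x : Fin d → ℝ) (y : Fin r → ℝ) (z : ℝ) : Fin r → ℝ :=
  fun j => deriv (fun s => w t x (Function.update y j s) z) (y j)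

/-- Partial derivative of `w(t,x,y,z)` in `z`. -/
def pzW (w : ℝ → (Fin d → ℝ) → (Fin r → ℝ) → ℝ → ℝ)
    (t : ℝ) (x : Fin d → ℝ) (y : Fin r → ℝ) (z : ℝ) : ℝ :=
  deriv (fun ζ => w t x y ζ) z

/-- Hessian of `w(t,x,y,z)` in `x`. -/
def hessXW (w : ℝ → (Fin d → ℝ) → (Fin r → ℝ) → ℝ → ℝ)
    (t : ℝ) (x : Fin d → ℝ) (y : Fin r → ℝ) (z : ℝ) : Matrix (Fin d) (Fin d) ℝ :=
  fun i j => deriv (fun s => gradXW w t (Function.update x j s) y z i) (x j)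


lemma hasDerivAt_comp_update {n : ℕ} {f : (Fin n → ℝ) → ℝ} {x : Fin n → ℝ}
    (hf : DifferentiableAt ℝ f x) (i : Fin n) :
    HasDerivAt (fun s => f (Function.update x i s)) (fderiv ℝ f x (Pi.single i 1)) (x i) := by
  have h1 := hasDerivAt_update x i (x i)
  have h2 : HasFDerivAt f (fderiv ℝ f x) (Function.update x i (x i)) := by
    rw [Function.update_eq_self]; exact hf.hasFDerivAt
  exact h2.comp_hasDerivAt (x i) h1

lemma diffAt_comp_update {n : ℕ} {f : (Fin n → ℝ) → ℝ} {x : Fin n → ℝ}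
    (hf : DifferentiableAt ℝ f x) (i : Fin n) :
    DifferentiableAt ℝ (fun s => f (Function.update x i s)) (x i) :=
  (hasDerivAt_comp_update hf i).differentiableAt

lemma deriv_comp_update {n : ℕ} {f : (Fin n → ℝ) → ℝ} {x : Fin n → ℝ}
    (hf : DifferentiableAt ℝ f x) (i : Fin n) :
    deriv (fun s => f (Function.update x i s)) (x i) = fderiv ℝ f x (Pi.single i 1) :=
  (hasDerivAt_comp_update hf i).deriv

lemma hasDerivAt_negexp {ρ z : ℝ} {g : ℝ → ℝ} {g' s : ℝ} (hg : HasDerivAt g g' s) :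
    HasDerivAt (fun u => -Real.exp (-(ρ * (z + g u))))
      (ρ * Real.exp (-(ρ * (z + g s))) * g') s := by
  have h := (((hg.const_add z).const_mul ρ).neg).exp.neg
  exact h.congr_deriv (by simp only [Pi.neg_apply]; ring)

lemma trace_mul_vecMulVec {n : ℕ} (S : Matrix (Fin n) (Fin n) ℝ) (a b : Fin n → ℝ) :
    (S * Matrix.vecMulVec a b).trace = b ⬝ᵥ S.mulVec a := by
  simp only [Matrix.trace, Matrix.diag, Matrix.mul_apply, Matrix.vecMulVec_apply,
    dotProduct, Matrix.mulVec, Finset.mul_sum]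
  exact Finset.sum_congr rfl fun i _ => Finset.sum_congr rfl fun j _ => by ring
/-- **Theorem 1 (verification step).** If `θ` solves the reduced PDE with terminal condition
`θ(T,x,y) = −(xᵀΨx + xᵀΥy + yᵀΓy)`, then `w(t,x,y,z) = −exp(−ρ(z + θ(t,x,y)))` solves the
HJB equation of the LEQG control problem, and for each `(t,x,y,z)` the supremum over `u` is
attained at `u* = ½A(t)⁻¹(∇_yθ(t,x,y) − B(t)x)`. -/
theorem reduced_pde_implies_hjb
    (d r : ℕ) (hd : 0 < d) (hr : 0 < r) (hrd : r ≤ d)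
    (T ρ : ℝ) (hT : 0 < T) (hρ : 0 < ρ)
    (Q₁₁ Y₁₁ U₁₁ : ℝ → Matrix (Fin d) (Fin d) ℝ)
    (Y₂₁ : ℝ → Matrix (Fin r) (Fin d) ℝ)
    (U₂₂ : ℝ → Matrix (Fin r) (Fin r) ℝ)
    (Ψ : Matrix (Fin d) (Fin d) ℝ) (Γ : Matrix (Fin r) (Fin r) ℝ)
    (Υ : Matrix (Fin d) (Fin r) ℝ)
    (hQ₁₁c : ContinuousOn Q₁₁ (Icc 0 T)) (hQ₁₁s : ∀ t ∈ Icc (0:ℝ) T, (Q₁₁ t).IsSymm)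
    (hY₁₁c : ContinuousOn Y₁₁ (Icc 0 T))
    (hY₂₁c : ContinuousOn Y₂₁ (Icc 0 T))
    (hU₁₁c : ContinuousOn U₁₁ (Icc 0 T)) (hU₁₁ : ∀ t ∈ Icc (0:ℝ) T, (U₁₁ t).PosSemidef)
    (hU₂₂c : ContinuousOn U₂₂ (Icc 0 T)) (hU₂₂ : ∀ t ∈ Icc (0:ℝ) T, (U₂₂ t).PosDef)
    (hΨ : Ψ.PosSemidef) (hΓ : Γ.IsSymm)
    -- the change of variables
    (A : ℝ → Matrix (Fin r) (Fin r) ℝ) (hA : ∀ t, A t = (U₂₂ t)⁻¹)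
    (B : ℝ → Matrix (Fin r) (Fin d) ℝ) (hB : ∀ t, B t = (2:ℝ) • (U₂₂ t * Y₂₁ t))
    (C : ℝ → Matrix (Fin d) (Fin d) ℝ) (hC : ∀ t, C t = Q₁₁ t + (Y₂₁ t)ᵀ * U₂₂ t * Y₂₁ t)
    (R : ℝ → Matrix (Fin d) (Fin d) ℝ) (hR : ∀ t, R t = -Y₁₁ t)
    (Sg : ℝ → Matrix (Fin d) (Fin d) ℝ) (hSg : ∀ t, Sg t = (1/2 : ℝ) • U₁₁ t)
    -- `θ` is C¹ in `t` and `y` and C² in `x`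
    (θ : ℝ → (Fin d → ℝ) → (Fin r → ℝ) → ℝ)
    (hθt : ∀ (x : Fin d → ℝ) (y : Fin r → ℝ), ContDiffOn ℝ 1 (fun τ => θ τ x y) (Icc (0:ℝ) T))
    (hθy : ∀ t ∈ Icc (0:ℝ) T, ∀ x : Fin d → ℝ, ContDiff ℝ 1 (fun y => θ t x y))
    (hθx : ∀ t ∈ Icc (0:ℝ) T, ∀ y : Fin r → ℝ, ContDiff ℝ 2 (fun x => θ t x y))
    -- `θ` solves the reduced PDE on `[0,T]`
    (hθpde : ∀ t ∈ Icc (0:ℝ) T, ∀ (x : Fin d → ℝ) (y : Fin r → ℝ),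
      0 = ptime T θ t x y
        + (1/4 : ℝ) * ((gradY θ t x y - (B t).mulVec x) ⬝ᵥ
            (A t)⁻¹.mulVec (gradY θ t x y - (B t).mulVec x))
        - x ⬝ᵥ (C t).mulVec x
        + x ⬝ᵥ (R t)ᵀ.mulVec (gradX θ t x y)
        + (1/2 : ℝ) * (Sg t * hessX θ t x y).trace
        - (ρ / 2) * (gradX θ t x y ⬝ᵥ (Sg t).mulVec (gradX θ t x y)))
    -- terminal condition for `θ`
    (hθT : ∀ (x : Fin d → ℝ) (y : Fin r → ℝ),
      θ T x y = -(x ⬝ᵥ Ψ.mulVec x + x ⬝ᵥ Υ.mulVec y + y ⬝ᵥ Γ.mulVec y)) :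
    -- `w` solves the HJB equation …
    (∀ t ∈ Icc (0:ℝ) T, ∀ (x : Fin d → ℝ) (y : Fin r → ℝ) (z : ℝ),
      0 = ptimeW T (fun t x y z => -Real.exp (-(ρ * (z + θ t x y)))) t x y z
        + sSup (Set.range fun u : Fin r → ℝ =>
            u ⬝ᵥ gradYW (fun t x y z => -Real.exp (-(ρ * (z + θ t x y)))) t x y z
              - (u ⬝ᵥ (A t).mulVec u + u ⬝ᵥ (B t).mulVec x)
                  * pzW (fun t x y z => -Real.exp (-(ρ * (z + θ t x y)))) t x y z)
        - (x ⬝ᵥ (C t).mulVec x)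
            * pzW (fun t x y z => -Real.exp (-(ρ * (z + θ t x y)))) t x y z
        + x ⬝ᵥ (R t)ᵀ.mulVec (gradXW (fun t x y z => -Real.exp (-(ρ * (z + θ t x y)))) t x y z)
        + (1/2 : ℝ)
            * (Sg t * hessXW (fun t x y z => -Real.exp (-(ρ * (z + θ t x y)))) t x y z).trace) ∧
    -- … with the correct terminal condition …
    (∀ (x : Fin d → ℝ) (y : Fin r → ℝ) (z : ℝ),
      -Real.exp (-(ρ * (z + θ T x y)))
        = -Real.exp (-(ρ * (z - x ⬝ᵥ Ψ.mulVec x - x ⬝ᵥ Υ.mulVec y - y ⬝ᵥ Γ.mulVec y)))) ∧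
    -- … and the supremum over `u` is attained at `u* = ½A(t)⁻¹(∇_yθ − Bx)`
    (∀ t ∈ Icc (0:ℝ) T, ∀ (x : Fin d → ℝ) (y : Fin r → ℝ) (z : ℝ),
      IsGreatest (Set.range fun u : Fin r → ℝ =>
          u ⬝ᵥ gradYW (fun t x y z => -Real.exp (-(ρ * (z + θ t x y)))) t x y z
            - (u ⬝ᵥ (A t).mulVec u + u ⬝ᵥ (B t).mulVec x)
                * pzW (fun t x y z => -Real.exp (-(ρ * (z + θ t x y)))) t x y z)
        (((1/2 : ℝ) • (A t)⁻¹.mulVec (gradY θ t x y - (B t).mulVec x)) ⬝ᵥ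
            gradYW (fun t x y z => -Real.exp (-(ρ * (z + θ t x y)))) t x y z
          - (((1/2 : ℝ) • (A t)⁻¹.mulVec (gradY θ t x y - (B t).mulVec x)) ⬝ᵥ
                (A t).mulVec ((1/2 : ℝ) • (A t)⁻¹.mulVec (gradY θ t x y - (B t).mulVec x))
              + ((1/2 : ℝ) • (A t)⁻¹.mulVec (gradY θ t x y - (B t).mulVec x)) ⬝ᵥ
                  (B t).mulVec x)
              * pzW (fun t x y z => -Real.exp (-(ρ * (z + θ t x y)))) t x y z)) := by

  set W : ℝ → (Fin d → ℝ) → (Fin r → ℝ) → ℝ → ℝ :=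
    fun t x y z => -Real.exp (-(ρ * (z + θ t x y))) with hW
  -- derivative of w in z
  have hpz : ∀ (t : ℝ) (x : Fin d → ℝ) (y : Fin r → ℝ) (z : ℝ),
      pzW W t x y z = ρ * Real.exp (-(ρ * (z + θ t x y))) := by
    intro t x y z
    have h : HasDerivAt (fun ζ : ℝ => -(ρ * (ζ + θ t x y))) (-(ρ * 1)) z :=
      (((hasDerivAt_id z).add_const (θ t x y)).const_mul ρ).neg
    have h2 := h.exp.neg
    simp only [pzW, hW]
    exact h2.deriv.trans (by ring)
  -- derivative of w in y
  have hgyW : ∀ t ∈ Icc (0:ℝ) T, ∀ (x : Fin d → ℝ) (y : Fin r → ℝ) (z : ℝ) (j : Fin r),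
      gradYW W t x y z j = ρ * Real.exp (-(ρ * (z + θ t x y))) * gradY θ t x y j := by
    intro t ht x y z j
    have hdg : DifferentiableAt ℝ (fun s => θ t x (Function.update y j s)) (y j) :=
      diffAt_comp_update (((hθy t ht x).differentiable one_ne_zero) y) j
    have hg : HasDerivAt (fun s => θ t x (Function.update y j s)) (gradY θ t x y j) (y j) :=
      hdg.hasDerivAt
    have h2 := hasDerivAt_negexp (ρ := ρ) (z := z) hg
    simp only [Function.update_eq_self] at h2
    simp only [gradYW, hW]
    exact h2.deriv
  -- derivative of w in x
  have hgxW : ∀ t ∈ Icc (0:ℝ) T, ∀ (x : Fin d → ℝ) (y : Fin r → ℝ) (z : ℝ) (i : Fin d),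
      gradXW W t x y z i = ρ * Real.exp (-(ρ * (z + θ t x y))) * gradX θ t x y i := by
    intro t ht x y z i
    have hdg : DifferentiableAt ℝ (fun s => θ t (Function.update x i s) y) (x i) :=
      diffAt_comp_update (((hθx t ht y).differentiable two_ne_zero) x) i
    have hg : HasDerivAt (fun s => θ t (Function.update x i s) y) (gradX θ t x y i) (x i) :=
      hdg.hasDerivAt
    have h2 := hasDerivAt_negexp (ρ := ρ) (z := z) hg
    simp only [Function.update_eq_self] at h2
    simp only [gradXW, hW]
    exact h2.deriv
  -- gradX as fderiv
  have hgxf : ∀ t ∈ Icc (0:ℝ) T, ∀ (x : Fin d → ℝ) (y : Fin r → ℝ) (i : Fin d),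
      gradX θ t x y i = fderiv ℝ (fun x => θ t x y) x (Pi.single i 1) := by
    intro t ht x y i
    exact deriv_comp_update (((hθx t ht y).differentiable two_ne_zero) x) i
  have hgxd : ∀ t ∈ Icc (0:ℝ) T, ∀ (y : Fin r → ℝ) (i : Fin d),
      Differentiable ℝ (fun x' => gradX θ t x' y i) := by
    intro t ht y i
    have h1 : ContDiff ℝ 1 (fderiv ℝ (fun x => θ t x y)) :=
      (hθx t ht y).fderiv_right (by norm_num)
    have h2 : Differentiable ℝ (fun x' => fderiv ℝ (fun x => θ t x y) x' (Pi.single i 1)) :=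
      (h1.clm_apply contDiff_const).differentiable one_ne_zero
    have heq : (fun x' => gradX θ t x' y i)
        = fun x' => fderiv ℝ (fun x => θ t x y) x' (Pi.single i 1) :=
      funext fun x' => hgxf t ht x' y i
    rw [heq]; exact h2
  have hHd : ∀ t ∈ Icc (0:ℝ) T, ∀ (x : Fin d → ℝ) (y : Fin r → ℝ) (i j : Fin d),
      HasDerivAt (fun s => gradX θ t (Function.update x j s) y i)
        (hessX θ t x y i j) (x j) := by
    intro t ht x y i j
    exact (diffAt_comp_update ((hgxd t ht y i) x) j).hasDerivAt
  -- second derivative of w in x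
  have hhw : ∀ t ∈ Icc (0:ℝ) T, ∀ (x : Fin d → ℝ) (y : Fin r → ℝ) (z : ℝ) (i j : Fin d),
      hessXW W t x y z i j
        = ρ * Real.exp (-(ρ * (z + θ t x y))) * hessX θ t x y i j
          - ρ * Real.exp (-(ρ * (z + θ t x y)))
            * (ρ * gradX θ t x y i * gradX θ t x y j) := by
    intro t ht x y z i j
    have heq : (fun s => gradXW W t (Function.update x j s) y z i)
        = fun s => ρ * Real.exp (-(ρ * (z + θ t (Function.update x j s) y)))
            * gradX θ t (Function.update x j s) y i :=
      funext fun s => hgxW t ht _ y z i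
    have hgθ : HasDerivAt (fun s => θ t (Function.update x j s) y) (gradX θ t x y j) (x j) :=
      (diffAt_comp_update (((hθx t ht y).differentiable two_ne_zero) x) j).hasDerivAt
    have hExp : HasDerivAt (fun s => Real.exp (-(ρ * (z + θ t (Function.update x j s) y))))
        (Real.exp (-(ρ * (z + θ t x y))) * -(ρ * gradX θ t x y j)) (x j) := by
      have h := (((hgθ.const_add z).const_mul ρ).neg).exp
      simpa [Function.update_eq_self] using h
    have hprod := (hExp.const_mul ρ).mul (hHd t ht x y i j)
    have h3 := hprod.deriv
    simp only [Function.update_eq_self] at h3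
    simp only [hessXW]
    rw [heq]
    exact h3.trans (by ring)
  -- derivative of w in t
  have hptW : ∀ t ∈ Icc (0:ℝ) T, ∀ (x : Fin d → ℝ) (y : Fin r → ℝ) (z : ℝ),
      ptimeW T W t x y z = ρ * Real.exp (-(ρ * (z + θ t x y))) * ptime T θ t x y := by
    intro t ht x y z
    have hθd : HasDerivWithinAt (fun τ => θ τ x y) (ptime T θ t x y) (Icc 0 T) t :=
      (((hθt x y).differentiableOn one_ne_zero) t ht).hasDerivWithinAt
    have h2 := (((hθd.const_add z).const_mul ρ).neg).exp.neg
    have h3 := h2.derivWithin (uniqueDiffOn_Icc hT t ht)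
    simp only [ptimeW, hW]
    exact h3.trans (by simp only [Pi.neg_apply]; ring)
  -- facts about A
  have hApd : ∀ t ∈ Icc (0:ℝ) T, (A t).PosDef := by
    intro t ht; rw [hA t]; exact (hU₂₂ t ht).inv
  have hAmul : ∀ t ∈ Icc (0:ℝ) T, A t * (A t)⁻¹ = 1 := by
    intro t ht
    have hdet : IsUnit (U₂₂ t).det := isUnit_iff_ne_zero.mpr (hU₂₂ t ht).det_pos.ne'
    rw [hA t, Matrix.nonsing_inv_nonsing_inv _ hdet, Matrix.nonsing_inv_mul _ hdet]
  have hposA : ∀ t ∈ Icc (0:ℝ) T, ∀ v : Fin r → ℝ, 0 ≤ v ⬝ᵥ (A t).mulVec v := by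
    intro t ht v
    simpa using (hApd t ht).posSemidef.dotProduct_mulVec_nonneg v
  have hAsymmT : ∀ t ∈ Icc (0:ℝ) T, (A t)ᵀ = A t := by
    intro t ht
    have h : (A t)ᴴ = A t := (hApd t ht).1
    rwa [Matrix.conjTranspose_eq_transpose_of_trivial] at h
  have hsym : ∀ t ∈ Icc (0:ℝ) T, ∀ u w : Fin r → ℝ,
      u ⬝ᵥ (A t).mulVec w = w ⬝ᵥ (A t).mulVec u := by
    intro t ht u w
    rw [Matrix.dotProduct_mulVec, ← Matrix.mulVec_transpose, hAsymmT t ht, dotProduct_comm]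
  -- the supremum is attained at u*
  have hgr : ∀ t ∈ Icc (0:ℝ) T, ∀ (x : Fin d → ℝ) (y : Fin r → ℝ) (z : ℝ),
      IsGreatest (Set.range fun u : Fin r → ℝ =>
          u ⬝ᵥ gradYW W t x y z
            - (u ⬝ᵥ (A t).mulVec u + u ⬝ᵥ (B t).mulVec x) * pzW W t x y z)
        (((1/2 : ℝ) • (A t)⁻¹.mulVec (gradY θ t x y - (B t).mulVec x)) ⬝ᵥ gradYW W t x y z
          - (((1/2 : ℝ) • (A t)⁻¹.mulVec (gradY θ t x y - (B t).mulVec x)) ⬝ᵥ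
                (A t).mulVec ((1/2 : ℝ) • (A t)⁻¹.mulVec (gradY θ t x y - (B t).mulVec x))
              + ((1/2 : ℝ) • (A t)⁻¹.mulVec (gradY θ t x y - (B t).mulVec x)) ⬝ᵥ
                  (B t).mulVec x) * pzW W t x y z) := by
    intro t ht x y z
    constructor
    · exact ⟨_, rfl⟩
    · rintro a ⟨u, rfl⟩
      beta_reduce
      have hgyv : gradYW W t x y z
          = (ρ * Real.exp (-(ρ * (z + θ t x y)))) • gradY θ t x y :=
        funext fun j => hgyW t ht x y z j
      rw [hgyv, hpz t x y z]
      set u' : Fin r → ℝ :=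
        (1/2 : ℝ) • (A t)⁻¹.mulVec (gradY θ t x y - (B t).mulVec x) with hu'
      set c : ℝ := ρ * Real.exp (-(ρ * (z + θ t x y))) with hc
      have hcpos : 0 < c := mul_pos hρ (Real.exp_pos _)
      have hAu' : (A t).mulVec u' = (1/2 : ℝ) • (gradY θ t x y - (B t).mulVec x) := by
        rw [hu', Matrix.mulVec_smul, Matrix.mulVec_mulVec, hAmul t ht, Matrix.one_mulVec]
      have e1 : u ⬝ᵥ (A t).mulVec u'
          = (1/2) * (u ⬝ᵥ gradY θ t x y - u ⬝ᵥ (B t).mulVec x) := by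
        rw [hAu', dotProduct_smul, dotProduct_sub, smul_eq_mul]
      have e2 : u' ⬝ᵥ (A t).mulVec u'
          = (1/2) * (u' ⬝ᵥ gradY θ t x y - u' ⬝ᵥ (B t).mulVec x) := by
        rw [hAu', dotProduct_smul, dotProduct_sub, smul_eq_mul]
      have e3 : u' ⬝ᵥ (A t).mulVec u = u ⬝ᵥ (A t).mulVec u' := hsym t ht u' u
      have h0 : 0 ≤ (u - u') ⬝ᵥ (A t).mulVec (u - u') := hposA t ht _
      rw [Matrix.mulVec_sub, dotProduct_sub, sub_dotProduct,
        sub_dotProduct] at h0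
      rw [dotProduct_smul, dotProduct_smul, smul_eq_mul, smul_eq_mul]
      have hq : u ⬝ᵥ gradY θ t x y - (u ⬝ᵥ (A t).mulVec u + u ⬝ᵥ (B t).mulVec x)
          ≤ u' ⬝ᵥ gradY θ t x y - (u' ⬝ᵥ (A t).mulVec u' + u' ⬝ᵥ (B t).mulVec x) := by
        linarith
      calc c * (u ⬝ᵥ gradY θ t x y)
            - (u ⬝ᵥ (A t).mulVec u + u ⬝ᵥ (B t).mulVec x) * c
          = c * (u ⬝ᵥ gradY θ t x y
              - (u ⬝ᵥ (A t).mulVec u + u ⬝ᵥ (B t).mulVec x)) := by ring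
        _ ≤ c * (u' ⬝ᵥ gradY θ t x y
              - (u' ⬝ᵥ (A t).mulVec u' + u' ⬝ᵥ (B t).mulVec x)) :=
            mul_le_mul_of_nonneg_left hq hcpos.le
        _ = c * (u' ⬝ᵥ gradY θ t x y)
              - (u' ⬝ᵥ (A t).mulVec u' + u' ⬝ᵥ (B t).mulVec x) * c := by ring
  refine ⟨?_, ?_, hgr⟩
  · -- the HJB equation
    intro t ht x y z
    rw [(hgr t ht x y z).csSup_eq]
    have hgyv : gradYW W t x y z
        = (ρ * Real.exp (-(ρ * (z + θ t x y)))) • gradY θ t x y :=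
      funext fun j => hgyW t ht x y z j
    have hgxv : gradXW W t x y z
        = (ρ * Real.exp (-(ρ * (z + θ t x y)))) • gradX θ t x y :=
      funext fun i => hgxW t ht x y z i
    have hAu' : (A t).mulVec ((1/2 : ℝ) • (A t)⁻¹.mulVec (gradY θ t x y - (B t).mulVec x))
        = (1/2 : ℝ) • (gradY θ t x y - (B t).mulVec x) := by
      rw [Matrix.mulVec_smul, Matrix.mulVec_mulVec, hAmul t ht, Matrix.one_mulVec]
    -- value of the supremum
    have hfu : ((1/2 : ℝ) • (A t)⁻¹.mulVec (gradY θ t x y - (B t).mulVec x)) ⬝ᵥ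
            gradYW W t x y z
          - (((1/2 : ℝ) • (A t)⁻¹.mulVec (gradY θ t x y - (B t).mulVec x)) ⬝ᵥ
                (A t).mulVec ((1/2 : ℝ) • (A t)⁻¹.mulVec (gradY θ t x y - (B t).mulVec x))
              + ((1/2 : ℝ) • (A t)⁻¹.mulVec (gradY θ t x y - (B t).mulVec x)) ⬝ᵥ
                  (B t).mulVec x) * pzW W t x y z
        = (ρ * Real.exp (-(ρ * (z + θ t x y))))
            * ((1/4 : ℝ) * ((gradY θ t x y - (B t).mulVec x) ⬝ᵥ
                (A t)⁻¹.mulVec (gradY θ t x y - (B t).mulVec x))) := by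
      rw [hgyv, hpz t x y z, hAu']
      simp only [dotProduct_smul, smul_dotProduct, dotProduct_sub,
        smul_eq_mul]
      rw [dotProduct_comm (gradY θ t x y - (B t).mulVec x)
        ((A t)⁻¹.mulVec (gradY θ t x y - (B t).mulVec x)), dotProduct_sub]
      ring
    have hxR : x ⬝ᵥ (R t)ᵀ.mulVec (gradXW W t x y z)
        = (ρ * Real.exp (-(ρ * (z + θ t x y))))
            * (x ⬝ᵥ (R t)ᵀ.mulVec (gradX θ t x y)) := by
      rw [hgxv, Matrix.mulVec_smul, dotProduct_smul, smul_eq_mul]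
    have hmat : hessXW W t x y z
        = (ρ * Real.exp (-(ρ * (z + θ t x y)))) • hessX θ t x y
          - (ρ * Real.exp (-(ρ * (z + θ t x y))) * ρ) •
              Matrix.vecMulVec (gradX θ t x y) (gradX θ t x y) := by
      ext i j
      rw [Matrix.sub_apply, Matrix.smul_apply, Matrix.smul_apply, Matrix.vecMulVec_apply,
        hhw t ht x y z i j, smul_eq_mul, smul_eq_mul]
      ring
    have htr : (Sg t * hessXW W t x y z).trace
        = (ρ * Real.exp (-(ρ * (z + θ t x y)))) * (Sg t * hessX θ t x y).trace
          - (ρ * Real.exp (-(ρ * (z + θ t x y))) * ρ)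
              * (gradX θ t x y ⬝ᵥ (Sg t).mulVec (gradX θ t x y)) := by
      rw [hmat, Matrix.mul_sub, Matrix.mul_smul, Matrix.mul_smul, Matrix.trace_sub,
        Matrix.trace_smul, Matrix.trace_smul, trace_mul_vecMulVec, smul_eq_mul, smul_eq_mul]
    rw [hfu, hptW t ht x y z, hpz t x y z, hxR, htr]
    linear_combination (ρ * Real.exp (-(ρ * (z + θ t x y)))) * (hθpde t ht x y)
  · -- terminal condition
    intro x y z
    have h : z + θ T x y
        = z - x ⬝ᵥ Ψ.mulVec x - x ⬝ᵥ Υ.mulVec y - y ⬝ᵥ Γ.mulVec y := by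
      rw [hθT x y]; ring
    rw [h]
end
end

section
/- Let A > 0, k > 0, ρ > 0, z > 0 and p ∈ ℝ. Then sup_{δ ∈ ℝ} (A·e^{−kδ}/(ρz))·(1 − e^{−ρz(δ−p)}) = (A/k)·(1 + ρz/k)^{−(1 + k/(ρz))}·e^{−kp}. -/
noncomputable section

lemma key_exp_ineq (k γ u : ℝ) (hk : 0 < k) (hγ : 0 < γ) :
    Real.exp (-(k * u)) * ((k + γ) - k * Real.exp (-(γ * u))) ≤ γ := by
  have h1 : 1 + (-(γ * u)) ≤ Real.exp (-(γ * u)) := by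
    have := Real.add_one_le_exp (-(γ * u)); linarith
  have h2 : 1 + k * u ≤ Real.exp (k * u) := by
    have := Real.add_one_le_exp (k * u); linarith
  have hstep : (k + γ) - k * Real.exp (-(γ * u)) ≤ γ * Real.exp (k * u) := by
    nlinarith [hk.le, hγ.le]
  have hpos : (0:ℝ) < Real.exp (-(k * u)) := Real.exp_pos _
  calc Real.exp (-(k * u)) * ((k + γ) - k * Real.exp (-(γ * u)))
      ≤ Real.exp (-(k * u)) * (γ * Real.exp (k * u)) := by
        exact mul_le_mul_of_nonneg_left hstep hpos.le
    _ = γ * (Real.exp (-(k * u)) * Real.exp (k * u)) := by ring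
    _ = γ := by rw [← Real.exp_add]; simp

/-- **Closed form of the market-making Hamiltonian for exponential intensities.** For
`Λ(δ) = A e^{-kδ}`, the supremum over `δ ∈ ℝ` of `(Λ(δ)/(ρz))(1 - e^{-ρz(δ-p)})` equals
`(A/k)(1 + ρz/k)^{-(1 + k/(ρz))} e^{-kp}`. -/
theorem exponential_intensity_hamiltonian_closed_form
    (A k ρ z : ℝ) (hA : 0 < A) (hk : 0 < k) (hρ : 0 < ρ) (hz : 0 < z) (p : ℝ) :
    IsLUB (Set.range fun δ : ℝ =>
        A * Real.exp (-(k * δ)) / (ρ * z) * (1 - Real.exp (-(ρ * z * (δ - p)))))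
      (A / k * (1 + ρ * z / k) ^ (-(1 + k / (ρ * z))) * Real.exp (-(k * p))) := by
  have hγ : 0 < ρ * z := mul_pos hρ hz
  set γ := ρ * z with hγdef
  have hb : (0:ℝ) < 1 + γ / k := by positivity
  set L := Real.log (1 + γ / k) with hLdef
  set δs := p + L / γ with hδsdef
  have hkγ : (0:ℝ) < k + γ := by positivity
  have hElog : Real.exp (-L) = k / (k + γ) := by
    rw [hLdef, Real.exp_neg, Real.exp_log hb]
    rw [show 1 + γ / k = (k + γ) / k by field_simp, inv_div]
  -- rewrite target value
  have hM : A / k * (1 + γ / k) ^ (-(1 + k / γ)) * Real.exp (-(k * p))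
      = A * Real.exp (-(k * δs)) / (k + γ) := by
    rw [Real.rpow_def_of_pos hb, ← hLdef]
    have e1 : L * (-(1 + k / γ)) = -L + (-(k * L / γ)) := by field_simp; ring
    have e2 : -(k * δs) = -(k * p) + (-(k * L / γ)) := by
      rw [hδsdef]; field_simp; ring
    rw [e1, e2, Real.exp_add, Real.exp_add, hElog]
    field_simp
  rw [hM]
  have hmem : (fun δ : ℝ =>
      A * Real.exp (-(k * δ)) / γ * (1 - Real.exp (-(γ * (δ - p))))) δs
      = A * Real.exp (-(k * δs)) / (k + γ) := by
    have h3 : γ * (δs - p) = L := by rw [hδsdef]; field_simp; ring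
    simp only [h3, hElog]
    field_simp
    ring
  constructor
  · rintro x ⟨δ, rfl⟩
    simp only
    set u := δ - δs with hu
    have hδ : δ = δs + u := by rw [hu]; ring
    have hexp1 : Real.exp (-(k * δ)) = Real.exp (-(k * δs)) * Real.exp (-(k * u)) := by
      rw [← Real.exp_add, hδ]; ring_nf
    have hexp2 : Real.exp (-(γ * (δ - p)))
        = Real.exp (-(γ * u)) * (k / (k + γ)) := by
      rw [← hElog, ← Real.exp_add, hδ, hδsdef]
      congr 1
      field_simp
      ring
    rw [hexp1, hexp2]
    have hC : (0:ℝ) < A * Real.exp (-(k * δs)) := by positivity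
    have hident : A * (Real.exp (-(k * δs)) * Real.exp (-(k * u))) / γ *
        (1 - Real.exp (-(γ * u)) * (k / (k + γ)))
        = A * Real.exp (-(k * δs)) / (γ * (k + γ)) *
          (Real.exp (-(k * u)) * ((k + γ) - k * Real.exp (-(γ * u)))) := by
      field_simp
    rw [hident]
    have hkey := key_exp_ineq k γ u hk hγ
    calc A * Real.exp (-(k * δs)) / (γ * (k + γ)) *
          (Real.exp (-(k * u)) * ((k + γ) - k * Real.exp (-(γ * u))))
        ≤ A * Real.exp (-(k * δs)) / (γ * (k + γ)) * γ := by
          apply mul_le_mul_of_nonneg_left hkey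
          positivity
      _ = A * Real.exp (-(k * δs)) / (k + γ) := by field_simp
  · intro b hb2
    exact hb2 ⟨δs, hmem⟩
end
end

section
/- Let A > 0, k > 0, ρ > 0, z > 0 and p ∈ ℝ. Then the function δ ↦ (A·e^{−kδ}/(ρz))·(1 − e^{−ρz(δ−p)}) on ℝ attains its supremum at the unique point δ* = p + (1/(ρz))·log(1 + ρz/k). -/
noncomputable section

private lemma core_le (k r s : ℝ) (hk : 0 < k) (hr : 0 < r) :
    k + r ≤ r * Real.exp (k * s) + k * Real.exp (-(r * s)) := by
  have h1 := Real.add_one_le_exp (k * s)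
  have h2 := Real.add_one_le_exp (-(r * s))
  nlinarith [mul_le_mul_of_nonneg_left h1 hr.le, mul_le_mul_of_nonneg_left h2 hk.le]

private lemma core_lt (k r s : ℝ) (hk : 0 < k) (hr : 0 < r) (hs : s ≠ 0) :
    k + r < r * Real.exp (k * s) + k * Real.exp (-(r * s)) := by
  have h1 := Real.add_one_lt_exp (mul_ne_zero hk.ne' hs)
  have h2 := Real.add_one_lt_exp (neg_ne_zero.mpr (mul_ne_zero hr.ne' hs))
  nlinarith [mul_lt_mul_of_pos_left h1 hr, mul_lt_mul_of_pos_left h2 hk]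

private lemma prod_le (k r A E s : ℝ) (hk : 0 < k) (hr : 0 < r) (hA : 0 < A) (hE : 0 < E) :
    A * (E * Real.exp (-(k * s))) / r * (1 - k / (k + r) * Real.exp (-(r * s))) ≤
      A * E / r * (1 - k / (k + r)) := by
  set X := Real.exp (-(k * s)) with hXdef
  set Y := Real.exp (-(r * s)) with hYdef
  have hX : 0 < X := Real.exp_pos _
  have hY : 0 < Y := Real.exp_pos _
  have hXinv : Real.exp (k * s) * X = 1 := by
    rw [hXdef, ← Real.exp_add]; simpa using Real.exp_zero
  have hcore := core_le k r s hk hr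
  have hkr : 0 < k + r := by linarith
  have hcore2 : (k + r) * X ≤ r + k * (X * Y) := by
    nlinarith [mul_le_mul_of_nonneg_right hcore hX.le]
  have hfact : A * E / r * (1 - k / (k + r)) - A * (E * X) / r * (1 - k / (k + r) * Y)
      = A * E / (r * (k + r)) * (r + k * (X * Y) - (k + r) * X) := by
    field_simp
    ring
  nlinarith [mul_nonneg (div_pos (mul_pos hA hE) (mul_pos hr hkr)).le
      (sub_nonneg.mpr hcore2)]

private lemma prod_lt (k r A E s : ℝ) (hk : 0 < k) (hr : 0 < r) (hA : 0 < A) (hE : 0 < E)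
    (hs : s ≠ 0) :
    A * (E * Real.exp (-(k * s))) / r * (1 - k / (k + r) * Real.exp (-(r * s))) <
      A * E / r * (1 - k / (k + r)) := by
  set X := Real.exp (-(k * s)) with hXdef
  set Y := Real.exp (-(r * s)) with hYdef
  have hX : 0 < X := Real.exp_pos _
  have hY : 0 < Y := Real.exp_pos _
  have hXinv : Real.exp (k * s) * X = 1 := by
    rw [hXdef, ← Real.exp_add]; simpa using Real.exp_zero
  have hcore := core_lt k r s hk hr hs
  have hkr : 0 < k + r := by linarith
  have hcore2 : (k + r) * X < r + k * (X * Y) := by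
    nlinarith [mul_lt_mul_of_pos_right hcore hX]
  have hfact : A * E / r * (1 - k / (k + r)) - A * (E * X) / r * (1 - k / (k + r) * Y)
      = A * E / (r * (k + r)) * (r + k * (X * Y) - (k + r) * X) := by
    field_simp
    ring
  nlinarith [mul_pos (div_pos (mul_pos hA hE) (mul_pos hr hkr))
      (sub_pos.mpr hcore2)]

/-- **Optimal quote shift for exponential intensities.** For `Λ(δ) = A e^{-kδ}`, the function
`δ ↦ (Λ(δ)/(ρz))(1 - e^{-ρz(δ-p)})` attains its supremum at the unique point
`δ* = p + (1/(ρz)) log(1 + ρz/k)`. -/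
theorem exponential_intensity_optimal_shift
    (A k ρ z : ℝ) (hA : 0 < A) (hk : 0 < k) (hρ : 0 < ρ) (hz : 0 < z) (p : ℝ) :
    (∀ δ : ℝ,
        A * Real.exp (-(k * δ)) / (ρ * z) * (1 - Real.exp (-(ρ * z * (δ - p)))) ≤
          A * Real.exp (-(k * (p + 1 / (ρ * z) * Real.log (1 + ρ * z / k)))) / (ρ * z) *
            (1 - Real.exp (-(ρ * z * ((p + 1 / (ρ * z) * Real.log (1 + ρ * z / k)) - p))))) ∧
    (∀ δ : ℝ,
        A * Real.exp (-(k * δ)) / (ρ * z) * (1 - Real.exp (-(ρ * z * (δ - p)))) =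
          A * Real.exp (-(k * (p + 1 / (ρ * z) * Real.log (1 + ρ * z / k)))) / (ρ * z) *
            (1 - Real.exp (-(ρ * z * ((p + 1 / (ρ * z) * Real.log (1 + ρ * z / k)) - p)))) →
        δ = p + 1 / (ρ * z) * Real.log (1 + ρ * z / k)) := by
  have hr : 0 < ρ * z := mul_pos hρ hz
  set r : ℝ := ρ * z with hrdef
  set D : ℝ := p + 1 / r * Real.log (1 + r / k) with hD
  have hkr : 0 < k + r := by linarith
  have h1k : 0 < 1 + r / k := by positivity
  have hDp : Real.exp (-(r * (D - p))) = k / (k + r) := by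
    have : r * (D - p) = Real.log (1 + r / k) := by
      rw [hD]; field_simp; ring
    rw [this, Real.exp_neg, Real.exp_log h1k]
    rw [inv_eq_one_div]
    field_simp
  have key : ∀ δ : ℝ,
      A * Real.exp (-(k * δ)) / r * (1 - Real.exp (-(r * (δ - p)))) =
        A * (Real.exp (-(k * D)) * Real.exp (-(k * (δ - D)))) / r *
          (1 - k / (k + r) * Real.exp (-(r * (δ - D)))) := by
    intro δ
    have e1 : Real.exp (-(k * δ)) = Real.exp (-(k * D)) * Real.exp (-(k * (δ - D))) := by
      rw [← Real.exp_add]; exact congrArg Real.exp (by ring)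
    have e2 : Real.exp (-(r * (δ - p))) = k / (k + r) * Real.exp (-(r * (δ - D))) := by
      rw [← hDp, ← Real.exp_add]; exact congrArg Real.exp (by ring)
    rw [e1, e2]
  have hE : 0 < Real.exp (-(k * D)) := Real.exp_pos _
  constructor
  · intro δ
    rw [key δ, hDp]
    exact prod_le k r A _ (δ - D) hk hr hA hE
  · intro δ heq
    by_contra hne
    have hs : δ - D ≠ 0 := sub_ne_zero.mpr hne
    rw [key δ, hDp] at heq
    have := prod_lt k r A _ (δ - D) hk hr hA hE hs
    linarith [heq ▸ this]
end
end

section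
/- Let Λ : ℝ → (0,∞) be twice continuously differentiable with Λ′(δ) < 0 for all δ, lim_{δ→+∞} Λ(δ) = 0, and sup_{δ∈ℝ} Λ(δ)Λ″(δ)/Λ′(δ)² < 2. Then for every ρ > 0, z > 0 and p ∈ ℝ, the function f(δ) := (Λ(δ)/(ρz))·(1 − exp(−ρz(δ−p))) is bounded above on ℝ and attains its supremum at a unique point δ* ∈ ℝ. -/
open Real Filter Set

noncomputable section

set_option maxHeartbeats 1000000

/-- **Existence and uniqueness of the optimal quote.** If `Λ : ℝ → (0,∞)` is C², strictly
decreasing with `Λ' < 0`, `Λ(δ) → 0` as `δ → ∞`, and `sup_δ Λ(δ)Λ''(δ)/Λ'(δ)² < 2`, then for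
every `ρ, z > 0` and `p ∈ ℝ` the function `f(δ) = (Λ(δ)/(ρz))(1 - e^{-ρz(δ-p)})` is bounded
above and attains its supremum at a unique point. -/
theorem hamiltonian_sup_attained_unique
    (Λ : ℝ → ℝ) (hΛpos : ∀ δ, 0 < Λ δ)
    (hΛC2 : ContDiff ℝ 2 Λ)
    (hΛ' : ∀ δ, deriv Λ δ < 0)
    (hΛlim : Filter.Tendsto Λ Filter.atTop (nhds 0))
    (hΛsup : ∃ c : ℝ, c < 2 ∧ ∀ δ, Λ δ * deriv (deriv Λ) δ / (deriv Λ δ) ^ 2 ≤ c)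
    (ρ z : ℝ) (hρ : 0 < ρ) (hz : 0 < z) (p : ℝ) :
    BddAbove (Set.range fun δ : ℝ => Λ δ / (ρ * z) * (1 - Real.exp (-(ρ * z * (δ - p))))) ∧
    ∃! δstar : ℝ, ∀ δ : ℝ,
      Λ δ / (ρ * z) * (1 - Real.exp (-(ρ * z * (δ - p)))) ≤
        Λ δstar / (ρ * z) * (1 - Real.exp (-(ρ * z * (δstar - p)))) := by
  obtain ⟨c, hc2, hc⟩ := hΛsup
  set k := ρ * z with hkdef
  have hk : 0 < k := mul_pos hρ hz
  have hkne : k ≠ 0 := ne_of_gt hk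
  set f : ℝ → ℝ := fun δ => Λ δ / k * (1 - Real.exp (-(k * (δ - p)))) with hfdef
  -- basic differentiability
  have hΛd : Differentiable ℝ Λ := hΛC2.differentiable (by norm_num)
  have h2 : ContDiff ℝ ((1 : ℕ∞) + 1) Λ := by exact_mod_cast hΛC2
  have hΛ'd : Differentiable ℝ (deriv Λ) :=
    (contDiff_succ_iff_deriv.mp h2).2.2.differentiable (by norm_num)
  have hΛ'ne : ∀ δ, deriv Λ δ ≠ 0 := fun δ => ne_of_lt (hΛ' δ)
  -- derivative of f
  have hfd : ∀ δ : ℝ, HasDerivAt f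
      (deriv Λ δ / k * (1 - Real.exp (-(k * (δ - p)))) + Λ δ * Real.exp (-(k * (δ - p)))) δ := by
    intro δ
    have hE : HasDerivAt (fun x : ℝ => Real.exp (-(k * (x - p))))
        (Real.exp (-(k * (δ - p))) * (-k)) δ := by
      have h1 : HasDerivAt (fun x : ℝ => -(k * (x - p))) (-k) δ := by
        simpa using ((hasDerivAt_id δ).sub_const p).const_mul (-k)
      exact h1.exp
    have h1 : HasDerivAt (fun x : ℝ => 1 - Real.exp (-(k * (x - p))))
        (-(Real.exp (-(k * (δ - p))) * (-k))) δ := hE.const_sub 1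
    have h3 := ((hΛd δ).hasDerivAt.div_const k).mul h1
    refine h3.congr_deriv ?_
    field_simp
  have hfdiff : Differentiable ℝ f := fun δ => (hfd δ).differentiableAt
  -- strict antitonicity of Λ
  have hanti : StrictAnti Λ := strictAnti_of_deriv_neg hΛ'
  -- bound
  have hfle : ∀ δ, f δ ≤ Λ p / k := by
    intro δ
    rcases le_or_gt p δ with h | h
    · have hm : Λ δ ≤ Λ p := hanti.antitone h
      have hE1 : 1 - Real.exp (-(k * (δ - p))) ≤ 1 := by
        have := Real.exp_pos (-(k * (δ - p))); linarith
      have h0 : (0:ℝ) ≤ Λ δ / k := le_of_lt (div_pos (hΛpos δ) hk)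
      calc f δ ≤ Λ δ / k * 1 := mul_le_mul_of_nonneg_left hE1 h0
        _ = Λ δ / k := mul_one _
        _ ≤ Λ p / k := by gcongr
    · have h1 : (1:ℝ) ≤ Real.exp (-(k * (δ - p))) := by
        apply Real.one_le_exp; nlinarith
      have h0 : (0:ℝ) < Λ δ / k := div_pos (hΛpos δ) hk
      have hneg : f δ ≤ 0 := mul_nonpos_of_nonneg_of_nonpos h0.le (by linarith)
      have : (0:ℝ) ≤ Λ p / k := le_of_lt (div_pos (hΛpos p) hk)
      linarith
  -- f tends to 0 at +∞
  have hflim : Tendsto f atTop (nhds 0) := by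
    have hElim : Tendsto (fun δ : ℝ => Real.exp (-(k * (δ - p)))) atTop (nhds 0) := by
      apply Real.tendsto_exp_atBot.comp
      have h1 : Tendsto (fun δ : ℝ => k * (δ - p)) atTop atTop :=
        (tendsto_atTop_add_const_right _ (-p) tendsto_id).const_mul_atTop hk
      simpa using tendsto_neg_atBot_iff.mpr h1
    have h1 : Tendsto (fun δ : ℝ => Λ δ / k) atTop (nhds (0 / k)) := hΛlim.div_const k
    have h2 : Tendsto (fun δ : ℝ => (1 : ℝ) - Real.exp (-(k * (δ - p)))) atTop (nhds (1 - 0)) :=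
      tendsto_const_nhds.sub hElim
    have h3 := h1.mul h2
    simpa using h3
  -- existence of the maximizer
  have ha : 0 < f (p + 1) := by
    have hlt : Real.exp (-(k * ((p + 1) - p))) < 1 := by
      apply Real.exp_lt_one_iff.mpr; nlinarith
    exact mul_pos (div_pos (hΛpos _) hk) (by linarith)
  obtain ⟨M, hM⟩ : ∃ M, ∀ δ ≥ M, f δ < f (p + 1) :=
    eventually_atTop.mp (hflim.eventually_lt_const ha)
  set M' := max M (p + 1) with hM'def
  have hpM' : p ≤ M' := le_trans (by linarith) (le_max_right _ _)
  obtain ⟨δ₀, hδ₀mem, hδ₀max⟩ :=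
    (isCompact_Icc : IsCompact (Icc p M')).exists_isMaxOn ⟨p, le_refl p, hpM'⟩
      hfdiff.continuous.continuousOn
  have hglob : ∀ δ, f δ ≤ f δ₀ := by
    intro δ
    have hp1 : f (p + 1) ≤ f δ₀ := hδ₀max ⟨by linarith, le_max_right _ _⟩
    rcases le_or_gt δ p with h | h
    · have h1 : (1:ℝ) ≤ Real.exp (-(k * (δ - p))) := by
        apply Real.one_le_exp; nlinarith
      have h0 : (0:ℝ) ≤ Λ δ / k := le_of_lt (div_pos (hΛpos δ) hk)
      have : f δ ≤ 0 := mul_nonpos_of_nonneg_of_nonpos h0 (by linarith)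
      linarith
    · rcases le_or_gt δ M' with h2 | h2
      · exact hδ₀max ⟨h.le, h2⟩
      · have : f δ < f (p + 1) := hM δ ((le_max_left M (p + 1)).trans h2.le)
        linarith
  -- the auxiliary function φ whose zeros are the critical points of f
  set φ : ℝ → ℝ := fun δ => Real.exp (k * (δ - p)) - 1 + k * Λ δ / deriv Λ δ with hφdef
  have hφd : ∀ x : ℝ, HasDerivAt φ
      (Real.exp (k * (x - p)) * k +
        ((k * deriv Λ x) * deriv Λ x - (k * Λ x) * deriv (deriv Λ) x) / (deriv Λ x) ^ 2) x := by
    intro x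
    have h1 : HasDerivAt (fun y : ℝ => Real.exp (k * (y - p))) (Real.exp (k * (x - p)) * k) x := by
      have hlin : HasDerivAt (fun y : ℝ => k * (y - p)) k x := by
        simpa using ((hasDerivAt_id x).sub_const p).const_mul k
      exact hlin.exp
    have h2 : HasDerivAt (fun y => k * Λ y / deriv Λ y)
        (((k * deriv Λ x) * deriv Λ x - (k * Λ x) * deriv (deriv Λ) x) / (deriv Λ x) ^ 2) x :=
      ((hΛd x).hasDerivAt.const_mul k).div (hΛ'd x).hasDerivAt (hΛ'ne x)
    exact (h1.sub_const 1).add h2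
  -- φ is strictly increasing on [p, ∞)
  have hφmono : StrictMonoOn φ (Ici p) := by
    apply strictMonoOn_of_deriv_pos (convex_Ici p)
    · apply Continuous.continuousOn
      exact ((Real.continuous_exp.comp (by continuity)).sub continuous_const).add
        ((continuous_const.mul hΛd.continuous).div hΛ'd.continuous hΛ'ne)
    · intro x hx
      rw [interior_Ici] at hx
      rw [(hφd x).deriv]
      have hA : 1 < Real.exp (k * (x - p)) := by
        apply Real.one_lt_exp_iff.mpr
        have : p < x := hx
        nlinarith
      have hq : Λ x * deriv (deriv Λ) x / (deriv Λ x) ^ 2 ≤ c := hc x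
      have hsq : (0:ℝ) < (deriv Λ x) ^ 2 := pow_two_pos_of_ne_zero (hΛ'ne x)
      have hrw : ((k * deriv Λ x) * deriv Λ x - (k * Λ x) * deriv (deriv Λ) x) / (deriv Λ x) ^ 2
          = k * (1 - Λ x * deriv (deriv Λ) x / (deriv Λ x) ^ 2) := by
        field_simp [hΛ'ne x]
      rw [hrw]
      nlinarith [mul_pos hk (sub_pos.mpr hA),
        mul_nonneg hk.le (sub_nonneg.mpr hq),
        mul_pos hk (by linarith : (0:ℝ) < 2 - c)]
  -- every global maximizer is a zero of φ lying in (p, ∞)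
  have hcrit : ∀ δ₁ : ℝ, (∀ δ, f δ ≤ f δ₁) → p < δ₁ ∧ φ δ₁ = 0 := by
    intro δ₁ hmax
    have hloc : IsLocalMax f δ₁ := Filter.Eventually.of_forall fun δ => hmax δ
    have hd0 : deriv f δ₁ = 0 := hloc.deriv_eq_zero
    rw [(hfd δ₁).deriv] at hd0
    rw [Real.exp_neg] at hd0
    have hAne : Real.exp (k * (δ₁ - p)) ≠ 0 := (Real.exp_pos _).ne'
    have hLne := hΛ'ne δ₁
    have hL := hΛ' δ₁
    have hP := hΛpos δ₁
    have hφ0 : Real.exp (k * (δ₁ - p)) - 1 + k * Λ δ₁ / deriv Λ δ₁ = 0 := by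
      set A := Real.exp (k * (δ₁ - p)) with hAdef
      set L := Λ δ₁ with hLdef
      set L' := deriv Λ δ₁ with hL'def
      field_simp at hd0 ⊢
      have h2 : A * ((A - 1) * L' + k * L) = 0 := by linear_combination A * hd0
      have h3 := (mul_eq_zero.mp h2).resolve_left hAne
      linarith
    have hfrac : k * Λ δ₁ / deriv Λ δ₁ < 0 := div_neg_of_pos_of_neg (mul_pos hk hP) hL
    have h1 : (1:ℝ) < Real.exp (k * (δ₁ - p)) := by linarith
    have h4 : 0 < k * (δ₁ - p) := Real.one_lt_exp_iff.mp h1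
    constructor
    · nlinarith
    · rw [hφdef]; exact hφ0
  -- conclusion
  refine ⟨⟨Λ p / k, ?_⟩, δ₀, hglob, ?_⟩
  · rintro x ⟨δ, rfl⟩; exact hfle δ
  · intro y hy
    obtain ⟨hy1, hy2⟩ := hcrit y hy
    obtain ⟨h01, h02⟩ := hcrit δ₀ hglob
    exact hφmono.injOn hy1.le h01.le (hy2.trans h02.symm)
end
end

section
/- Let Λ : ℝ → (0,∞) be twice continuously differentiable with Λ′(δ) < 0 for all δ, lim_{δ→+∞} Λ(δ) = 0, and sup_{δ∈ℝ} Λ(δ)Λ″(δ)/Λ′(δ)² < 2, and fix ρ > 0 and z > 0. Define H(z,p) := sup_{δ∈ℝ} (Λ(δ)/(ρz))·(1 − exp(−ρz(δ−p))) for p ∈ ℝ. Then 0 < H(z,p) < ∞ for every p ∈ ℝ, and the function p ↦ H(z,p) is strictly decreasing on ℝ. -/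
noncomputable section

/-- **Properties of the market-making Hamiltonian.** If `Λ : ℝ → (0,∞)` is C², strictly
decreasing with `Λ' < 0`, `Λ(δ) → 0` as `δ → ∞`, and `sup_δ Λ(δ)Λ''(δ)/Λ'(δ)² < 2`, and
`ρ, z > 0`, then `H(z,p) = sup_δ (Λ(δ)/(ρz))(1 - e^{-ρz(δ-p)})` is finite and positive for
every `p`, and `p ↦ H(z,p)` is strictly decreasing. -/
theorem hamiltonian_positive_finite_strictAnti
    (Λ : ℝ → ℝ) (hΛpos : ∀ δ, 0 < Λ δ)
    (hΛC2 : ContDiff ℝ 2 Λ)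
    (hΛ' : ∀ δ, deriv Λ δ < 0)
    (hΛlim : Filter.Tendsto Λ Filter.atTop (nhds 0))
    (hΛsup : ∃ c : ℝ, c < 2 ∧ ∀ δ, Λ δ * deriv (deriv Λ) δ / (deriv Λ δ) ^ 2 ≤ c)
    (ρ z : ℝ) (hρ : 0 < ρ) (hz : 0 < z) :
    (∀ p : ℝ,
      BddAbove (Set.range fun δ : ℝ => Λ δ / (ρ * z) * (1 - Real.exp (-(ρ * z * (δ - p))))) ∧
      0 < sSup (Set.range fun δ : ℝ =>
        Λ δ / (ρ * z) * (1 - Real.exp (-(ρ * z * (δ - p)))))) ∧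
    StrictAnti (fun p : ℝ => sSup (Set.range fun δ : ℝ =>
      Λ δ / (ρ * z) * (1 - Real.exp (-(ρ * z * (δ - p)))))) := by
  have hρz : 0 < ρ * z := mul_pos hρ hz
  have hanti : StrictAnti Λ := strictAnti_of_deriv_neg hΛ'
  -- uniform upper bound
  have hbd : ∀ p δ : ℝ, Λ δ / (ρ * z) * (1 - Real.exp (-(ρ * z * (δ - p)))) ≤ Λ p / (ρ * z) := by
    intro p δ
    rcases le_or_gt δ p with h | h
    · have h1 : 1 ≤ Real.exp (-(ρ * z * (δ - p))) :=
        Real.one_le_exp (by nlinarith)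
      have h2 : Λ δ / (ρ * z) * (1 - Real.exp (-(ρ * z * (δ - p)))) ≤ 0 :=
        mul_nonpos_of_nonneg_of_nonpos (div_pos (hΛpos δ) hρz).le (by linarith)
      have h3 : 0 ≤ Λ p / (ρ * z) := (div_pos (hΛpos p) hρz).le
      linarith
    · have h1 : 0 < Real.exp (-(ρ * z * (δ - p))) := Real.exp_pos _
      have h2 : Λ δ ≤ Λ p := (hanti h).le
      calc Λ δ / (ρ * z) * (1 - Real.exp (-(ρ * z * (δ - p))))
          ≤ Λ δ / (ρ * z) * 1 :=
            mul_le_mul_of_nonneg_left (by linarith) (div_pos (hΛpos δ) hρz).le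
        _ = Λ δ / (ρ * z) := mul_one _
        _ ≤ Λ p / (ρ * z) := (div_le_div_iff_of_pos_right hρz).mpr h2
  have hB : ∀ p : ℝ,
      BddAbove (Set.range fun δ : ℝ => Λ δ / (ρ * z) * (1 - Real.exp (-(ρ * z * (δ - p))))) :=
    fun p => ⟨Λ p / (ρ * z), by rintro y ⟨δ, rfl⟩; exact hbd p δ⟩
  have hpos : ∀ p : ℝ, 0 < sSup (Set.range fun δ : ℝ =>
      Λ δ / (ρ * z) * (1 - Real.exp (-(ρ * z * (δ - p))))) := by
    intro p
    have h1 : Real.exp (-(ρ * z * ((p + 1) - p))) < 1 :=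
      Real.exp_lt_one_iff.mpr (by nlinarith)
    have h2 : 0 < Λ (p + 1) / (ρ * z) * (1 - Real.exp (-(ρ * z * ((p + 1) - p)))) :=
      mul_pos (div_pos (hΛpos _) hρz) (by linarith)
    exact lt_of_lt_of_le h2 (le_csSup (hB p) ⟨p + 1, rfl⟩)
  refine ⟨fun p => ⟨hB p, hpos p⟩, ?_⟩
  intro p₁ p₂ hp
  simp only
  set S₁ := sSup (Set.range fun δ : ℝ =>
    Λ δ / (ρ * z) * (1 - Real.exp (-(ρ * z * (δ - p₁))))) with hS₁def
  set S₂ := sSup (Set.range fun δ : ℝ =>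
    Λ δ / (ρ * z) * (1 - Real.exp (-(ρ * z * (δ - p₂))))) with hS₂def
  have hS₂pos : 0 < S₂ := hpos p₂
  -- pointwise monotonicity in p
  have hmono : ∀ δ : ℝ, Λ δ / (ρ * z) * (1 - Real.exp (-(ρ * z * (δ - p₂)))) ≤
      Λ δ / (ρ * z) * (1 - Real.exp (-(ρ * z * (δ - p₁)))) := by
    intro δ
    have h1 : Real.exp (-(ρ * z * (δ - p₁))) ≤ Real.exp (-(ρ * z * (δ - p₂))) :=
      Real.exp_le_exp.mpr (by nlinarith)
    exact mul_le_mul_of_nonneg_left (by linarith) (div_pos (hΛpos δ) hρz).le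
  have hS₂leS₁ : S₂ ≤ S₁ := by
    refine csSup_le (Set.range_nonempty _) ?_
    rintro y ⟨δ, rfl⟩
    exact le_trans (hmono δ) (le_csSup (hB p₁) ⟨δ, rfl⟩)
  -- threshold beyond which Λ is small
  obtain ⟨D₀, hD₀⟩ := Filter.eventually_atTop.mp
    (hΛlim.eventually_lt_const (show (0:ℝ) < ρ * z * (S₂ / 2) by nlinarith))
  set D := max D₀ p₂ with hDdef
  have hD : ∀ x : ℝ, D ≤ x → Λ x < ρ * z * (S₂ / 2) :=
    fun x hx => hD₀ x (le_trans (le_max_left _ _) hx)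
  have hDp₂ : p₂ ≤ D := le_max_right _ _
  set ε₀ := Real.exp (-(ρ * z * (D - p₂))) with hε₀def
  have hε₀ : 0 < ε₀ := Real.exp_pos _
  have hε₀le : ε₀ ≤ 1 := Real.exp_le_one_iff.mpr (by nlinarith)
  set q := 1 - Real.exp (-(ρ * z * (p₂ - p₁))) with hqdef
  have hq : 0 < q := by
    have := Real.exp_lt_one_iff.mpr (show -(ρ * z * (p₂ - p₁)) < 0 by nlinarith)
    simp only [hqdef]; linarith
  have hq1 : q ≤ 1 := by
    have := Real.exp_pos (-(ρ * z * (p₂ - p₁)))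
    simp only [hqdef]; linarith
  set c := S₂ / 2 * ε₀ * q with hcdef
  have hc : 0 < c := by positivity
  -- every value of the p₂-family is ≤ S₁ - c
  have hkey : ∀ δ : ℝ, Λ δ / (ρ * z) * (1 - Real.exp (-(ρ * z * (δ - p₂)))) ≤ S₁ - c := by
    intro δ
    rcases lt_or_ge (Λ δ / (ρ * z) * (1 - Real.exp (-(ρ * z * (δ - p₂))))) (S₂ / 2) with h | h
    · have hcle : c ≤ S₂ / 2 := by
        rw [hcdef]
        have h1 : ε₀ * q ≤ 1 := mul_le_one₀ hε₀le hq.le hq1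
        calc S₂ / 2 * ε₀ * q = S₂ / 2 * (ε₀ * q) := by ring
          _ ≤ S₂ / 2 * 1 := mul_le_mul_of_nonneg_left h1 (by linarith)
          _ = S₂ / 2 := mul_one _
      linarith
    · have ha : 0 < Λ δ / (ρ * z) := div_pos (hΛpos δ) hρz
      have hexpv : 0 < Real.exp (-(ρ * z * (δ - p₂))) := Real.exp_pos _
      have hage : S₂ / 2 ≤ Λ δ / (ρ * z) := by nlinarith
      have hΛge : ρ * z * (S₂ / 2) ≤ Λ δ := by
        rw [le_div_iff₀ hρz] at hage; nlinarith
      have hδD : δ ≤ D := by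
        by_contra hcon
        push_neg at hcon
        exact absurd (hD δ hcon.le) (by linarith)
      have hεv : ε₀ ≤ Real.exp (-(ρ * z * (δ - p₂))) :=
        Real.exp_le_exp.mpr (by nlinarith)
      have hgap : Λ δ / (ρ * z) * (1 - Real.exp (-(ρ * z * (δ - p₁)))) -
          Λ δ / (ρ * z) * (1 - Real.exp (-(ρ * z * (δ - p₂)))) =
          Λ δ / (ρ * z) * (Real.exp (-(ρ * z * (δ - p₂))) * q) := by
        have hsplit : Real.exp (-(ρ * z * (δ - p₁))) =
            Real.exp (-(ρ * z * (δ - p₂))) * Real.exp (-(ρ * z * (p₂ - p₁))) := by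
          rw [← Real.exp_add]; ring_nf
        rw [hsplit]; simp only [hqdef]; ring
      have h1 : S₂ / 2 * ε₀ ≤ Λ δ / (ρ * z) * Real.exp (-(ρ * z * (δ - p₂))) :=
        mul_le_mul hage hεv hε₀.le ha.le
      have h2 : c ≤ Λ δ / (ρ * z) * (Real.exp (-(ρ * z * (δ - p₂))) * q) := by
        simp only [hcdef]; nlinarith
      have h3 : Λ δ / (ρ * z) * (1 - Real.exp (-(ρ * z * (δ - p₁)))) ≤ S₁ :=
        le_csSup (hB p₁) ⟨δ, rfl⟩
      linarith
  have hfin : S₂ ≤ S₁ - c := by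
    refine csSup_le (Set.range_nonempty _) ?_
    rintro y ⟨δ, rfl⟩
    exact hkey δ
  linarith
end
end
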